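/- arXiv:2203.01901 — 11 statements merged into one kernel-verified Lean document; each statement's English description precedes it below -/
import Mathlib

section
/- If the length of a cube in the integer lattice is measured by its edge vectors, then the edge length is an integer: if three pairwise orthogonal vectors in ℤ³ all have the same length d > 0, then d is a (positive) integer. -/
def dot3 (a b : Fin 3 → ℤ) : ℤ := a 0 * b 0 + a 1 * b 1 + a 2 * b 2

/-- If three pairwise orthogonal vectors in `ℤ³` all have the same length `d > 0`,
then `d` is a positive integer. -/
theorem edge_length_is_integer (a b c : Fin 3 → ℤ) (d : ℝ) (hd : 0 < d)
    (hab : dot3 a b = 0) (hac : dot3 a c = 0) (hbc : dot3 b c = 0)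
    (ha : (dot3 a a : ℝ) = d ^ 2) (hb : (dot3 b b : ℝ) = d ^ 2)
    (hc : (dot3 c c : ℝ) = d ^ 2) :
    ∃ n : ℕ, 0 < n ∧ (n : ℝ) = d := by
  set N : ℤ := dot3 a a with hN
  have hNb : dot3 b b = N := by
    have : ((dot3 b b : ℤ) : ℝ) = ((N : ℤ) : ℝ) := by rw [hb, ← ha]
    exact_mod_cast this
  have hNc : dot3 c c = N := by
    have : ((dot3 c c : ℤ) : ℝ) = ((N : ℤ) : ℝ) := by rw [hc, ← ha]
    exact_mod_cast this
  have hNpos : 0 < N := by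
    have : (0 : ℝ) < (N : ℝ) := by rw [ha]; positivity
    exact_mod_cast this
  -- determinant
  set D : ℤ := a 0 * (b 1 * c 2 - b 2 * c 1) - a 1 * (b 0 * c 2 - b 2 * c 0)
      + a 2 * (b 0 * c 1 - b 1 * c 0) with hD
  have key : D ^ 2 = N ^ 3 := by
    have h1 : dot3 a b = 0 := hab
    have h2 : dot3 a c = 0 := hac
    have h3 : dot3 b c = 0 := hbc
    have h4 : dot3 b b = N := hNb
    have h5 : dot3 c c = N := hNc
    simp only [dot3] at h1 h2 h3 h4 h5 hN
    rw [hD]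
    linear_combination (-((b 0 * b 0 + b 1 * b 1 + b 2 * b 2) * (c 0 * c 0 + c 1 * c 1 + c 2 * c 2))) * hN
      + (N * (c 0 * c 0 + c 1 * c 1 + c 2 * c 2)) * h4 + (N ^ 2) * h5
      + (-(c 0 * c 0 + c 1 * c 1 + c 2 * c 2) * (a 0 * b 0 + a 1 * b 1 + a 2 * b 2)
          + 2 * (a 0 * c 0 + a 1 * c 1 + a 2 * c 2) * (b 0 * c 0 + b 1 * c 1 + b 2 * c 2)) * h1
      + (-(b 0 * b 0 + b 1 * b 1 + b 2 * b 2) * (a 0 * c 0 + a 1 * c 1 + a 2 * c 2)) * h2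
      + (-(a 0 * a 0 + a 1 * a 1 + a 2 * a 2) * (b 0 * c 0 + b 1 * c 1 + b 2 * c 2)) * h3
  have hdvd : N ∣ D := by
    have : N ^ 2 ∣ D ^ 2 := ⟨N, by linarith [key]⟩
    exact (Int.pow_dvd_pow_iff (two_ne_zero)).mp this
  obtain ⟨m, hm⟩ := hdvd
  have hm2 : m ^ 2 = N := by
    have hN2 : (N:ℤ)^2 ≠ 0 := pow_ne_zero _ hNpos.ne'
    have : N ^ 2 * m ^ 2 = N ^ 2 * N := by linear_combination key - (D + N * m) * hm
    exact mul_left_cancel₀ hN2 this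
  refine ⟨m.natAbs, ?_, ?_⟩
  · have : m ≠ 0 := by rintro rfl; simp at hm2; omega
    exact Int.natAbs_pos.mpr this
  · have hr : ((m.natAbs : ℝ)) ^ 2 = d ^ 2 := by
      rw [← ha, ← hm2]
      push_cast [Nat.cast_natAbs]
      rw [sq_abs]
    have h0 : (0:ℝ) ≤ (m.natAbs : ℝ) := by positivity
    nlinarith [hr, hd, h0]
end

section
/- For a primitive vector v ∈ ℤ³, if a and b are a ℤ-basis of the lattice v^⊥ = {x ∈ ℤ³ : x · v = 0}, then a × b = ±v; in particular the area of the fundamental parallelogram of v^⊥ equals ‖v‖. -/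
def cross3 (a b : Fin 3 → ℤ) : Fin 3 → ℤ :=
  ![a 1 * b 2 - a 2 * b 1, a 2 * b 0 - a 0 * b 2, a 0 * b 1 - a 1 * b 0]

def Primitive (v : Fin 3 → ℤ) : Prop := Int.gcd (Int.gcd (v 0) (v 1)) (v 2) = 1

/-- For a primitive `v ∈ ℤ³` and a `ℤ`-basis `a, b` of `v^⊥`, one has `a × b = ±v`;
in particular the area of the fundamental parallelogram of `v^⊥` equals `‖v‖`. -/
theorem perp_fundamental_area (v a b : Fin 3 → ℤ) (hv : Primitive v)
    (ha : dot3 a v = 0) (hb : dot3 b v = 0)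
    (hind : LinearIndependent ℤ ![a, b])
    (hspan : ∀ x : Fin 3 → ℤ, dot3 x v = 0 → ∃ m n : ℤ, x = m • a + n • b) :
    (cross3 a b = v ∨ cross3 a b = -v) ∧
      dot3 (cross3 a b) (cross3 a b) = dot3 v v := by
  simp only [dot3] at ha hb
  have hvZ : ((Int.gcd ((Int.gcd (v 0) (v 1) : ℤ)) (v 2) : ℤ)) = 1 := by
    have h : Int.gcd ((Int.gcd (v 0) (v 1) : ℤ)) (v 2) = 1 := hv
    exact_mod_cast h
  -- Bezout coefficients from primitivity of v
  obtain ⟨α, β, γ, hbez⟩ : ∃ α β γ : ℤ, α * v 0 + β * v 1 + γ * v 2 = 1 := by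
    have h1 := Int.gcd_eq_gcd_ab (v 0) (v 1)
    have h2 := Int.gcd_eq_gcd_ab ((Int.gcd (v 0) (v 1) : ℤ)) (v 2)
    rw [hvZ] at h2
    exact ⟨Int.gcdA (v 0) (v 1) * Int.gcdA (Int.gcd (v 0) (v 1)) (v 2),
      Int.gcdB (v 0) (v 1) * Int.gcdA (Int.gcd (v 0) (v 1)) (v 2),
      Int.gcdB (Int.gcd (v 0) (v 1)) (v 2), by
        linear_combination -Int.gcdA ((Int.gcd (v 0) (v 1) : ℤ)) (v 2) * h1 - h2⟩
  -- components of the cross product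
  have hc0 : cross3 a b 0 = a 1 * b 2 - a 2 * b 1 := rfl
  have hc1 : cross3 a b 1 = a 2 * b 0 - a 0 * b 2 := rfl
  have hc2 : cross3 a b 2 = a 0 * b 1 - a 1 * b 0 := rfl
  -- the cross product is parallel to v
  have hp01 : cross3 a b 0 * v 1 = cross3 a b 1 * v 0 := by
    rw [hc0, hc1]; linear_combination b 2 * ha - a 2 * hb
  have hp02 : cross3 a b 0 * v 2 = cross3 a b 2 * v 0 := by
    rw [hc0, hc2]; linear_combination -b 1 * ha + a 1 * hb
  have hp12 : cross3 a b 1 * v 2 = cross3 a b 2 * v 1 := by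
    rw [hc1, hc2]; linear_combination b 0 * ha - a 0 * hb
  set k : ℤ := α * cross3 a b 0 + β * cross3 a b 1 + γ * cross3 a b 2 with hk
  have hck : ∀ i, cross3 a b i = k * v i := by
    intro i
    fin_cases i
    · show cross3 a b 0 = k * v 0
      rw [hk]; linear_combination -cross3 a b 0 * hbez + β * hp01 + γ * hp02
    · show cross3 a b 1 = k * v 1
      rw [hk]; linear_combination -cross3 a b 1 * hbez - α * hp01 + γ * hp12
    · show cross3 a b 2 = k * v 2
      rw [hk]; linear_combination -cross3 a b 2 * hbez - α * hp02 - β * hp12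
  -- three vectors in the lattice
  obtain ⟨m0, n0, e0⟩ := hspan ![0, v 2, -v 1] (by simp [dot3]; ring)
  obtain ⟨m1, n1, e1⟩ := hspan ![-v 2, 0, v 0] (by simp [dot3]; ring)
  obtain ⟨m2, n2, e2⟩ := hspan ![v 1, -v 0, 0] (by simp [dot3]; ring)
  have E0 : ∀ j, (![0, v 2, -v 1] : Fin 3 → ℤ) j = m0 * a j + n0 * b j := by
    intro j; rw [e0]; simp [mul_comm]
  have E1 : ∀ j, (![-v 2, 0, v 0] : Fin 3 → ℤ) j = m1 * a j + n1 * b j := by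
    intro j; rw [e1]; simp [mul_comm]
  have E2 : ∀ j, (![v 1, -v 0, 0] : Fin 3 → ℤ) j = m2 * a j + n2 * b j := by
    intro j; rw [e2]; simp [mul_comm]
  have E00 : (0 : ℤ) = m0 * a 0 + n0 * b 0 := by simpa using E0 0
  have E01 : v 2 = m0 * a 1 + n0 * b 1 := by simpa using E0 1
  have E02 : -v 1 = m0 * a 2 + n0 * b 2 := by simpa using E0 2
  have E10 : -v 2 = m1 * a 0 + n1 * b 0 := by simpa using E1 0
  have E11 : (0 : ℤ) = m1 * a 1 + n1 * b 1 := by simpa using E1 1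
  have E12 : v 0 = m1 * a 2 + n1 * b 2 := by simpa using E1 2
  have E20 : v 1 = m2 * a 0 + n2 * b 0 := by simpa using E2 0
  have E21 : -v 0 = m2 * a 1 + n2 * b 1 := by simpa using E2 1
  have E22 : (0 : ℤ) = m2 * a 2 + n2 * b 2 := by simpa using E2 2
  -- x0 × x1 = v 2 • v
  have hA0 : v 0 * v 2 = (m0 * n1 - n0 * m1) * (k * v 0) := by
    rw [← hck 0, hc0]
    linear_combination v 0 * E01 + (m0 * a 1 + n0 * b 1) * E12 -
      (m0 * a 2 + n0 * b 2) * E11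
  have hA1 : v 1 * v 2 = (m0 * n1 - n0 * m1) * (k * v 1) := by
    rw [← hck 1, hc1]
    linear_combination (-v 2) * E02 + (m0 * a 2 + n0 * b 2) * E10 - v 0 * E00 -
      (m0 * a 0 + n0 * b 0) * E12
  have hA2 : v 2 * v 2 = (m0 * n1 - n0 * m1) * (k * v 2) := by
    rw [← hck 2, hc2]
    linear_combination (m0 * a 0 + n0 * b 0) * E11 + v 2 * E01 -
      (m0 * a 1 + n0 * b 1) * E10
  have hdvd2 : k ∣ v 2 := by
    refine ⟨m0 * n1 - n0 * m1, ?_⟩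
    linear_combination α * hA0 + β * hA1 + γ * hA2 -
      (v 2 - k * (m0 * n1 - n0 * m1)) * hbez
  -- x1 × x2 = v 0 • v
  have hB0 : v 0 * v 0 = (m1 * n2 - n1 * m2) * (k * v 0) := by
    rw [← hck 0, hc0]
    linear_combination (m1 * a 1 + n1 * b 1) * E22 + v 0 * E12 -
      (m1 * a 2 + n1 * b 2) * E21
  have hB1 : v 1 * v 0 = (m1 * n2 - n1 * m2) * (k * v 1) := by
    rw [← hck 1, hc1]
    linear_combination v 1 * E12 + (m1 * a 2 + n1 * b 2) * E20 -
      (m1 * a 0 + n1 * b 0) * E22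
  have hB2 : v 2 * v 0 = (m1 * n2 - n1 * m2) * (k * v 2) := by
    rw [← hck 2, hc2]
    linear_combination (-v 0) * E10 + (m1 * a 0 + n1 * b 0) * E21 - v 1 * E11 -
      (m1 * a 1 + n1 * b 1) * E20
  have hdvd0 : k ∣ v 0 := by
    refine ⟨m1 * n2 - n1 * m2, ?_⟩
    linear_combination α * hB0 + β * hB1 + γ * hB2 -
      (v 0 - k * (m1 * n2 - n1 * m2)) * hbez
  -- x2 × x0 = v 1 • v
  have hC0 : v 0 * v 1 = (m2 * n0 - n2 * m0) * (k * v 0) := by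
    rw [← hck 0, hc0]
    linear_combination (-v 1) * E21 + (m2 * a 1 + n2 * b 1) * E02 - v 2 * E22 -
      (m2 * a 2 + n2 * b 2) * E01
  have hC1 : v 1 * v 1 = (m2 * n0 - n2 * m0) * (k * v 1) := by
    rw [← hck 1, hc1]
    linear_combination (m2 * a 2 + n2 * b 2) * E00 + v 1 * E20 -
      (m2 * a 0 + n2 * b 0) * E02
  have hC2 : v 2 * v 1 = (m2 * n0 - n2 * m0) * (k * v 2) := by
    rw [← hck 2, hc2]
    linear_combination v 2 * E20 + (m2 * a 0 + n2 * b 0) * E01 -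
      (m2 * a 1 + n2 * b 1) * E00
  have hdvd1 : k ∣ v 1 := by
    refine ⟨m2 * n0 - n2 * m0, ?_⟩
    linear_combination α * hC0 + β * hC1 + γ * hC2 -
      (v 1 - k * (m2 * n0 - n2 * m0)) * hbez
  -- k is a unit
  have hk1 : k = 1 ∨ k = -1 := by
    have h : k ∣ (1 : ℤ) := by
      have := Int.dvd_coe_gcd (Int.dvd_coe_gcd hdvd0 hdvd1) hdvd2
      rwa [hvZ] at this
    exact Int.isUnit_iff.mp (isUnit_of_dvd_one h)
  constructor
  · rcases hk1 with h | h
    · left; funext i; rw [hck i, h, one_mul]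
    · right; funext i; rw [hck i, h, Pi.neg_apply]; ring
  · simp only [dot3]
    rw [hck 0, hck 1, hck 2]
    rcases hk1 with h | h <;> rw [h] <;> ring
end

section
/- Fix a primitive vector v ∈ ℤ³. The map a ↦ a × v induces a bijection from the quotient group ℤ³/⟨v⟩ onto the lattice v^⊥ = {x ∈ ℤ³ : x · v = 0}. -/
lemma exists_dual (v : Fin 3 → ℤ) (hv : Primitive v) :
    ∃ c : Fin 3 → ℤ, c 0 * v 0 + c 1 * v 1 + c 2 * v 2 = 1 := by
  have h1 : (Int.gcd (v 0) (v 1) : ℤ) = v 0 * Int.gcdA (v 0) (v 1) + v 1 * Int.gcdB (v 0) (v 1) :=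
    Int.gcd_eq_gcd_ab _ _
  have h2 : (Int.gcd (Int.gcd (v 0) (v 1)) (v 2) : ℤ) =
      (Int.gcd (v 0) (v 1) : ℤ) * Int.gcdA (Int.gcd (v 0) (v 1)) (v 2)
      + v 2 * Int.gcdB (Int.gcd (v 0) (v 1)) (v 2) := Int.gcd_eq_gcd_ab _ _
  rw [hv] at h2
  push_cast at h2
  refine ⟨![Int.gcdA (v 0) (v 1) * Int.gcdA (Int.gcd (v 0) (v 1)) (v 2),
    Int.gcdB (v 0) (v 1) * Int.gcdA (Int.gcd (v 0) (v 1)) (v 2),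
    Int.gcdB (Int.gcd (v 0) (v 1)) (v 2)], ?_⟩
  simp only [Matrix.cons_val_zero, Matrix.cons_val_one, Matrix.head_cons,
    Matrix.cons_val_two, Matrix.tail_cons]
  linear_combination (-(Int.gcdA (Int.gcd (v 0) (v 1)) (v 2))) * h1 - h2

lemma cross3_apply (a b : Fin 3 → ℤ) :
    cross3 a b 0 = a 1 * b 2 - a 2 * b 1 ∧
    cross3 a b 1 = a 2 * b 0 - a 0 * b 2 ∧
    cross3 a b 2 = a 0 * b 1 - a 1 * b 0 := by
  refine ⟨rfl, rfl, rfl⟩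

/-- For primitive `v`, the map `a ↦ a × v` induces a bijection from `ℤ³/⟨v⟩`
onto `v^⊥`: it lands in `v^⊥`, is injective modulo multiples of `v`, and surjective. -/
theorem cross_with_primitive_bijection (v : Fin 3 → ℤ) (hv : Primitive v) :
    (∀ a : Fin 3 → ℤ, dot3 (cross3 a v) v = 0) ∧
    (∀ a b : Fin 3 → ℤ, cross3 a v = cross3 b v → ∃ k : ℤ, a - b = k • v) ∧
    (∀ x : Fin 3 → ℤ, dot3 x v = 0 → ∃ a : Fin 3 → ℤ, cross3 a v = x) := by
  obtain ⟨c, hc⟩ := exists_dual v hv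
  refine ⟨?_, ?_, ?_⟩
  · intro a
    obtain ⟨p0, p1, p2⟩ := cross3_apply a v
    simp only [dot3, p0, p1, p2]
    ring
  · intro a b hab
    obtain ⟨pa0, pa1, pa2⟩ := cross3_apply a v
    obtain ⟨pb0, pb1, pb2⟩ := cross3_apply b v
    have e0 : a 1 * v 2 - a 2 * v 1 = b 1 * v 2 - b 2 * v 1 := by
      rw [← pa0, ← pb0, hab]
    have e1 : a 2 * v 0 - a 0 * v 2 = b 2 * v 0 - b 0 * v 2 := by
      rw [← pa1, ← pb1, hab]
    have e2 : a 0 * v 1 - a 1 * v 0 = b 0 * v 1 - b 1 * v 0 := by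
      rw [← pa2, ← pb2, hab]
    set k : ℤ := (a 0 - b 0) * c 0 + (a 1 - b 1) * c 1 + (a 2 - b 2) * c 2 with hk
    refine ⟨k, ?_⟩
    have h0 : a 0 - b 0 = k * v 0 := by
      rw [hk]; linear_combination (-(a 0 - b 0)) * hc + c 1 * e2 - c 2 * e1
    have h1 : a 1 - b 1 = k * v 1 := by
      rw [hk]; linear_combination (-(a 1 - b 1)) * hc + c 2 * e0 - c 0 * e2
    have h2 : a 2 - b 2 = k * v 2 := by
      rw [hk]; linear_combination (-(a 2 - b 2)) * hc + c 0 * e1 - c 1 * e0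
    funext i
    fin_cases i
    · exact h0
    · exact h1
    · exact h2
  · intro x hx
    simp only [dot3] at hx
    refine ⟨cross3 c x, ?_⟩
    obtain ⟨q0, q1, q2⟩ := cross3_apply c x
    obtain ⟨p0, p1, p2⟩ := cross3_apply (cross3 c x) v
    have h0 : cross3 (cross3 c x) v 0 = x 0 := by
      rw [p0, q1, q2]; linear_combination x 0 * hc - c 0 * hx
    have h1 : cross3 (cross3 c x) v 1 = x 1 := by
      rw [p1, q2, q0]; linear_combination x 1 * hc - c 1 * hx
    have h2 : cross3 (cross3 c x) v 2 = x 2 := by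
      rw [p2, q0, q1]; linear_combination x 2 * hc - c 2 * hx
    funext i
    fin_cases i
    · exact h0
    · exact h1
    · exact h2
end

section
/- Let Γ ⊆ ℤ³ be a cubic sublattice with edge length d (i.e., Γ is generated by three pairwise orthogonal integer vectors each of length d). Then for any a, b ∈ Γ, the cross product a × b is divisible by d in ℤ³, and (a × b)/d ∈ Γ. -/
/-- A cubic sublattice of `ℤ³` with edge length `d`: a subgroup generated by three
pairwise orthogonal vectors of length `d`. -/
def IsCubicLattice (Γ : AddSubgroup (Fin 3 → ℤ)) (d : ℕ) : Prop :=
  ∃ a b c : Fin 3 → ℤ,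
    Γ = AddSubgroup.closure {a, b, c} ∧
    dot3 a b = 0 ∧ dot3 a c = 0 ∧ dot3 b c = 0 ∧
    dot3 a a = (d : ℤ)^2 ∧ dot3 b b = (d : ℤ)^2 ∧ dot3 c c = (d : ℤ)^2

open Matrix in
lemma key_lemma (d : ℕ) (hd : 0 < d) (u v w : Fin 3 → ℤ)
    (huv : dot3 u v = 0) (huw : dot3 u w = 0) (hvw : dot3 v w = 0)
    (huu : dot3 u u = (d : ℤ)^2) (hvv : dot3 v v = (d : ℤ)^2) (hww : dot3 w w = (d : ℤ)^2) :
    cross3 u v = (d : ℤ) • w ∨ cross3 u v = (d : ℤ) • (-w) := by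
  simp only [dot3] at huv huw hvw huu hvv hww
  set M : Matrix (Fin 3) (Fin 3) ℤ := Matrix.of ![u, v, w] with hM
  have hMMT : M * Mᵀ = ((d : ℤ)^2) • 1 := by
    ext i j
    rw [Matrix.mul_apply]
    simp only [hM, Matrix.transpose_apply, Matrix.of_apply, Fin.sum_univ_three]
    fin_cases i <;> fin_cases j <;> simp [Matrix.one_apply] <;> linarith
  have hdetne : Mᵀ.det ≠ 0 := by
    have h2 : M.det * M.det = ((d : ℤ)^2)^3 := by
      have := congrArg Matrix.det hMMT
      rwa [Matrix.det_mul, Matrix.det_transpose, Matrix.det_smul, Matrix.det_one,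
        Fintype.card_fin, mul_one] at this
    rw [Matrix.det_transpose]
    intro h
    rw [h, mul_zero] at h2
    have : (0:ℤ) < ((d : ℤ)^2)^3 := by positivity
    omega
  have hMTM : Mᵀ * M = ((d : ℤ)^2) • 1 := by
    have h0 : (Mᵀ * M - ((d : ℤ)^2) • 1) * Mᵀ = 0 := by
      rw [sub_mul, Matrix.mul_assoc, hMMT, Matrix.mul_smul, Matrix.mul_one,
        Matrix.smul_mul, Matrix.one_mul, sub_self]
    have h1 : Mᵀ.det • (Mᵀ * M - ((d : ℤ)^2) • 1) = 0 := by
      calc Mᵀ.det • (Mᵀ * M - ((d : ℤ)^2) • 1)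
          = (Mᵀ * M - ((d : ℤ)^2) • 1) * (Mᵀ * Mᵀ.adjugate) := by
            rw [Matrix.mul_adjugate, Matrix.mul_smul, Matrix.mul_one]
        _ = ((Mᵀ * M - ((d : ℤ)^2) • 1) * Mᵀ) * Mᵀ.adjugate := by rw [Matrix.mul_assoc]
        _ = 0 := by rw [h0, Matrix.zero_mul]
    rcases smul_eq_zero.mp h1 with h | h
    · exact absurd h hdetne
    · exact sub_eq_zero.mp h
  have key : ∀ i j : Fin 3, u i * u j + v i * v j + w i * w j
      = (d : ℤ)^2 * (if i = j then 1 else 0) := by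
    intro i j
    have h := congrFun (congrFun hMTM i) j
    rw [Matrix.mul_apply] at h
    simp only [hM, Matrix.transpose_apply, Matrix.of_apply, Fin.sum_univ_three] at h
    simpa [Matrix.one_apply] using h
  have k00 : u 0 * u 0 + v 0 * v 0 + w 0 * w 0 = (d : ℤ)^2 := by simpa using key 0 0
  have k11 : u 1 * u 1 + v 1 * v 1 + w 1 * w 1 = (d : ℤ)^2 := by simpa using key 1 1
  have k22 : u 2 * u 2 + v 2 * v 2 + w 2 * w 2 = (d : ℤ)^2 := by simpa using key 2 2
  have k01 : u 0 * u 1 + v 0 * v 1 + w 0 * w 1 = 0 := by simpa using key 0 1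
  have k02 : u 0 * u 2 + v 0 * v 2 + w 0 * w 2 = 0 := by simpa using key 0 2
  have k12 : u 1 * u 2 + v 1 * v 2 + w 1 * w 2 = 0 := by simpa using key 1 2
  have k10 : u 1 * u 0 + v 1 * v 0 + w 1 * w 0 = 0 := by simpa using key 1 0
  have k20 : u 2 * u 0 + v 2 * v 0 + w 2 * w 0 = 0 := by simpa using key 2 0
  have k21 : u 2 * u 1 + v 2 * v 1 + w 2 * w 1 = 0 := by simpa using key 2 1
  set x0 : ℤ := u 1 * v 2 - u 2 * v 1 with hx0
  set x1 : ℤ := u 2 * v 0 - u 0 * v 2 with hx1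
  set x2 : ℤ := u 0 * v 1 - u 1 * v 0 with hx2
  set t : ℤ := x0 * w 0 + x1 * w 1 + x2 * w 2 with ht
  have h0 : (d : ℤ)^2 * x0 = t * w 0 := by
    rw [ht, hx0, hx1, hx2]
    linear_combination (-(u 1 * v 2 - u 2 * v 1)) * k00 + (-(u 2 * v 0 - u 0 * v 2)) * k01
      + (-(u 0 * v 1 - u 1 * v 0)) * k02
  have h1 : (d : ℤ)^2 * x1 = t * w 1 := by
    rw [ht, hx0, hx1, hx2]
    linear_combination (-(u 1 * v 2 - u 2 * v 1)) * k10 + (-(u 2 * v 0 - u 0 * v 2)) * k11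
      + (-(u 0 * v 1 - u 1 * v 0)) * k12
  have h2 : (d : ℤ)^2 * x2 = t * w 2 := by
    rw [ht, hx0, hx1, hx2]
    linear_combination (-(u 1 * v 2 - u 2 * v 1)) * k20 + (-(u 2 * v 0 - u 0 * v 2)) * k21
      + (-(u 0 * v 1 - u 1 * v 0)) * k22
  have hxx : x0 * x0 + x1 * x1 + x2 * x2 = (d : ℤ)^4 := by
    rw [hx0, hx1, hx2]
    linear_combination (v 0 * v 0 + v 1 * v 1 + v 2 * v 2) * huu + (d : ℤ)^2 * hvv
      - (u 0 * v 0 + u 1 * v 1 + u 2 * v 2) * huv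
  have ht2 : t * t = ((d : ℤ)^3) * ((d : ℤ)^3) := by
    rw [ht, hx0, hx1, hx2]
    linear_combination (d : ℤ)^2 * hxx - x0 * h0 - x1 * h1 - x2 * h2
  have hdz : ((d : ℤ)^2) ≠ 0 := by positivity
  rcases mul_self_eq_mul_self_iff.mp ht2 with hts | hts
  · left
    funext i
    have cancel : ∀ j : Fin 3, (d : ℤ)^2 * (cross3 u v j) = (d : ℤ)^2 * ((d:ℤ) * w j) := by
      intro j
      fin_cases j
      · show (d : ℤ)^2 * x0 = (d : ℤ)^2 * ((d:ℤ) * w 0); rw [h0, hts]; ring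
      · show (d : ℤ)^2 * x1 = (d : ℤ)^2 * ((d:ℤ) * w 1); rw [h1, hts]; ring
      · show (d : ℤ)^2 * x2 = (d : ℤ)^2 * ((d:ℤ) * w 2); rw [h2, hts]; ring
    have := mul_left_cancel₀ hdz (cancel i)
    simpa using this
  · right
    funext i
    have cancel : ∀ j : Fin 3, (d : ℤ)^2 * (cross3 u v j) = (d : ℤ)^2 * ((d:ℤ) * (-w j)) := by
      intro j
      fin_cases j
      · show (d : ℤ)^2 * x0 = (d : ℤ)^2 * ((d:ℤ) * (-w 0)); rw [h0, hts]; ring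
      · show (d : ℤ)^2 * x1 = (d : ℤ)^2 * ((d:ℤ) * (-w 1)); rw [h1, hts]; ring
      · show (d : ℤ)^2 * x2 = (d : ℤ)^2 * ((d:ℤ) * (-w 2)); rw [h2, hts]; ring
    have := mul_left_cancel₀ hdz (cancel i)
    simpa using this

lemma cross3_self_aux (x : Fin 3 → ℤ) : cross3 x x = 0 := by
  funext i; fin_cases i <;> simp [cross3] <;> ring

lemma cross3_add_left' (x y z : Fin 3 → ℤ) : cross3 (x + y) z = cross3 x z + cross3 y z := by
  funext i; fin_cases i <;> simp [cross3] <;> ring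

lemma cross3_add_right' (x y z : Fin 3 → ℤ) : cross3 x (y + z) = cross3 x y + cross3 x z := by
  funext i; fin_cases i <;> simp [cross3] <;> ring

lemma cross3_comm' (x y : Fin 3 → ℤ) : cross3 y x = -cross3 x y := by
  funext i; fin_cases i <;> simp [cross3] <;> ring

lemma cross3_zero_left' (x : Fin 3 → ℤ) : cross3 0 x = 0 := by
  funext i; fin_cases i <;> simp [cross3]

lemma cross3_zero_right' (x : Fin 3 → ℤ) : cross3 x 0 = 0 := by
  funext i; fin_cases i <;> simp [cross3]

lemma cross3_neg_left' (x z : Fin 3 → ℤ) : cross3 (-x) z = -cross3 x z := by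
  funext i; fin_cases i <;> simp [cross3] <;> ring

lemma cross3_neg_right' (x z : Fin 3 → ℤ) : cross3 x (-z) = -cross3 x z := by
  funext i; fin_cases i <;> simp [cross3] <;> ring

lemma dot3_comm' (x y : Fin 3 → ℤ) : dot3 x y = dot3 y x := by simp [dot3]; ring

/-- In a cubic sublattice of edge length `d`, the cross product of two lattice
vectors is divisible by `d`, and the quotient again lies in the sublattice. -/
theorem cross_div_edge_mem (Γ : AddSubgroup (Fin 3 → ℤ)) (d : ℕ) (hd : 0 < d)
    (hΓ : IsCubicLattice Γ d) (a b : Fin 3 → ℤ) (ha : a ∈ Γ) (hb : b ∈ Γ) :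
    ∃ w ∈ Γ, (d : ℤ) • w = cross3 a b := by
  obtain ⟨u, v, w, hcl, huv, huw, hvw, huu, hvv, hww⟩ := hΓ
  subst hcl
  set Γ := AddSubgroup.closure ({u, v, w} : Set (Fin 3 → ℤ)) with hΓdef
  have hu : u ∈ Γ := AddSubgroup.subset_closure (by simp)
  have hv : v ∈ Γ := AddSubgroup.subset_closure (by simp)
  have hw : w ∈ Γ := AddSubgroup.subset_closure (by simp)
  -- cross products of pairs of generators
  have Puv : ∃ e ∈ Γ, (d : ℤ) • e = cross3 u v := by
    rcases key_lemma d hd u v w huv huw hvw huu hvv hww with h | h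
    · exact ⟨w, hw, h.symm⟩
    · exact ⟨-w, neg_mem hw, h.symm⟩
  have Puw : ∃ e ∈ Γ, (d : ℤ) • e = cross3 u w := by
    rcases key_lemma d hd u w v huw huv ((dot3_comm' v w) ▸ hvw) huu hww hvv with h | h
    · exact ⟨v, hv, h.symm⟩
    · exact ⟨-v, neg_mem hv, h.symm⟩
  have Pvw : ∃ e ∈ Γ, (d : ℤ) • e = cross3 v w := by
    rcases key_lemma d hd v w u hvw ((dot3_comm' u v) ▸ huv) ((dot3_comm' u w) ▸ huw)
        hvv hww huu with h | h
    · exact ⟨u, hu, h.symm⟩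
    · exact ⟨-u, neg_mem hu, h.symm⟩
  have swap : ∀ x y : Fin 3 → ℤ, (∃ e ∈ Γ, (d : ℤ) • e = cross3 x y) →
      ∃ e ∈ Γ, (d : ℤ) • e = cross3 y x := by
    rintro x y ⟨e, he, hde⟩
    exact ⟨-e, neg_mem he, by rw [cross3_comm', smul_neg, hde]⟩
  have diag : ∀ x : Fin 3 → ℤ, ∃ e ∈ Γ, (d : ℤ) • e = cross3 x x := fun x =>
    ⟨0, zero_mem Γ, by rw [cross3_self_aux, smul_zero]⟩
  -- induction
  induction ha, hb using AddSubgroup.closure_induction₂ with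
  | mem x y hx hy =>
    rcases hx with rfl | rfl | rfl <;> rcases hy with rfl | rfl | rfl
    · exact diag _
    · exact Puv
    · exact Puw
    · exact swap _ _ Puv
    · exact diag _
    · exact Pvw
    · exact swap _ _ Puw
    · exact swap _ _ Pvw
    · exact diag _
  | zero_left y hy => exact ⟨0, zero_mem Γ, by rw [cross3_zero_left', smul_zero]⟩
  | zero_right x hx => exact ⟨0, zero_mem Γ, by rw [cross3_zero_right', smul_zero]⟩
  | add_left x y z hx hy hz h1 h2 =>
    obtain ⟨e1, he1, hd1⟩ := h1
    obtain ⟨e2, he2, hd2⟩ := h2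
    exact ⟨e1 + e2, add_mem he1 he2, by rw [smul_add, hd1, hd2, cross3_add_left']⟩
  | add_right y z x hy hz hx h1 h2 =>
    obtain ⟨e1, he1, hd1⟩ := h1
    obtain ⟨e2, he2, hd2⟩ := h2
    exact ⟨e1 + e2, add_mem he1 he2, by rw [smul_add, hd1, hd2, cross3_add_right']⟩
  | neg_left x y hx hy h =>
    obtain ⟨e, he, hde⟩ := h
    exact ⟨-e, neg_mem he, by rw [smul_neg, hde, cross3_neg_left']⟩
  | neg_right x y hx hy h =>
    obtain ⟨e, he, hde⟩ := h
    exact ⟨-e, neg_mem he, by rw [smul_neg, hde, cross3_neg_right']⟩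
end

section
/- Let v ∈ ℤ³ be primitive with d² ∣ ‖v‖², and let a ∈ ℤ³ satisfy d ∣ a × v and d² ∣ (a × v) × v. Then d² divides the dot product a · v. -/
/-- If `v` is primitive, `d² ∣ ‖v‖²`, `d ∣ a × v` and `d² ∣ (a × v) × v`,
then `d² ∣ a · v`. -/
theorem dot_div_sq (v a : Fin 3 → ℤ) (hv : Primitive v) (d : ℤ)
    (hdvd : d^2 ∣ dot3 v v)
    (h1 : ∀ i, d ∣ cross3 a v i)
    (h2 : ∀ i, d^2 ∣ cross3 (cross3 a v) v i) :
    d^2 ∣ dot3 a v := by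
  set t := dot3 a v with ht
  have key : ∀ i, d^2 ∣ t * v i := by
    intro i
    have hid : t * v i = cross3 (cross3 a v) v i + dot3 v v * a i := by
      fin_cases i <;> simp [ht, dot3, cross3] <;> ring
    rw [hid]
    exact dvd_add (h2 i) (hdvd.mul_right _)
  -- Bezout for gcd (v 0) (v 1)
  have hg : d^2 ∣ t * Int.gcd (v 0) (v 1) := by
    rw [Int.gcd_eq_gcd_ab (v 0) (v 1), mul_add, ← mul_assoc, ← mul_assoc]
    exact dvd_add ((key 0).mul_right _) ((key 1).mul_right _)
  have hfin : d^2 ∣ t * Int.gcd (Int.gcd (v 0) (v 1)) (v 2) := by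
    rw [Int.gcd_eq_gcd_ab (Int.gcd (v 0) (v 1)) (v 2), mul_add, ← mul_assoc, ← mul_assoc]
    exact dvd_add (hg.mul_right _) ((key 2).mul_right _)
  rw [hv] at hfin
  simpa using hfin
end

section
/- Let Γ ⊆ ℤ³ be a subgroup of index d³ such that d² divides a · b for all a, b ∈ Γ. Then Γ contains a vector of length exactly d. -/
private lemma aux_k_eq_one (D k : ℤ) (hD : 0 < D) (h1 : D * k < 2 * D) (h2 : 0 < D * k) :
    k = 1 := by nlinarith

set_option maxHeartbeats 1000000 in
open MeasureTheory Submodule Module in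
/-- A subgroup of `ℤ³` of index `d³` in which all dot products are divisible by `d²`
contains a vector of length exactly `d`. -/
theorem exists_vector_of_length_d (Γ : AddSubgroup (Fin 3 → ℤ)) (d : ℕ) (hd : 0 < d)
    (hindex : Γ.index = d ^ 3)
    (hdot : ∀ a ∈ Γ, ∀ b ∈ Γ, (d : ℤ)^2 ∣ dot3 a b) :
    ∃ a ∈ Γ, dot3 a a = (d : ℤ)^2 := by
  classical
  -- Smith normal form of Γ as a ℤ-submodule of ℤ³
  obtain ⟨n, snf⟩ := (AddSubgroup.toIntSubmodule Γ).smithNormalForm (Pi.basisFun ℤ (Fin 3))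
  have hΓ' : (AddSubgroup.toIntSubmodule Γ).toAddSubgroup = Γ := rfl
  have hne : (AddSubgroup.toIntSubmodule Γ).toAddSubgroup.index ≠ 0 := by
    rw [hΓ', hindex]; positivity
  have hn3 : n = 3 := by simpa using snf.toAddSubgroup_index_ne_zero_iff.mp hne
  subst hn3
  -- the product of the diagonal entries is d³
  have hprod : (∏ i, (snf.a i).natAbs) = d ^ 3 := by
    have h := snf.toAddSubgroup_index_eq_pow_mul_prod
    rw [hΓ', hindex] at h
    simp only [Ideal.span_singleton_toAddSubgroup_eq_zmultiples, Int.index_zmultiples,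
      Fintype.card_fin, Nat.sub_self, pow_zero, one_mul] at h
    exact h.symm
  -- the integer matrix of the basis of Γ
  set B : Matrix (Fin 3) (Fin 3) ℤ := Matrix.of (fun i j => ((snf.bN i : Fin 3 → ℤ) j)) with hB
  set C : Matrix (Fin 3) (Fin 3) ℤ := Matrix.of (fun i j => (snf.bM i) j) with hC
  set σ : Equiv.Perm (Fin 3) := snf.f.equivOfFiniteSelfEmbedding with hσ
  have hσf : ∀ i, σ i = snf.f i := fun i => rfl
  have hBdet : B.det.natAbs = d ^ 3 := by
    have hBeq : B = Matrix.of (fun i j => snf.a i * (C.submatrix σ id) i j) := by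
      ext i j
      have h1 : (snf.bN i : Fin 3 → ℤ) = snf.a i • snf.bM (snf.f i) := snf.snf i
      simp only [hB, Matrix.of_apply, h1, Pi.smul_apply, smul_eq_mul,
        Matrix.submatrix_apply, id_eq, hσf, hC]
    have hdet1 : B.det = (∏ i, snf.a i) * ((Equiv.Perm.sign σ : ℤ) * C.det) := by
      rw [hBeq, Matrix.det_mul_column, Matrix.det_permute]
      push_cast
      ring
    have hCdet : C.det.natAbs = 1 := by
      have hCT : Matrix.transpose C = (Pi.basisFun ℤ (Fin 3)).toMatrix ⇑snf.bM := by
        ext i j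
        simp [hC, Basis.toMatrix_apply, Matrix.transpose_apply]
      have hmul := (Pi.basisFun ℤ (Fin 3)).toMatrix_mul_toMatrix_flip snf.bM
      have h2 : ((Pi.basisFun ℤ (Fin 3)).toMatrix ⇑snf.bM).det.natAbs *
          ((snf.bM.toMatrix ⇑(Pi.basisFun ℤ (Fin 3))).det).natAbs = 1 := by
        rw [← Int.natAbs_mul, ← Matrix.det_mul, hmul, Matrix.det_one]; rfl
      have h1 := Nat.eq_one_of_mul_eq_one_right h2
      rw [← Matrix.det_transpose, hCT, h1]
    have hsign : ((Equiv.Perm.sign σ : ℤ)).natAbs = 1 := by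
      rcases Int.units_eq_one_or (Equiv.Perm.sign σ) with h | h <;> rw [h] <;> rfl
    rw [hdet1, Int.natAbs_mul, Int.natAbs_mul, hCdet, hsign, mul_one, mul_one,
      ← hprod]
    exact map_prod Int.natAbsHom _ _
  -- the real matrix
  set A : Matrix (Fin 3) (Fin 3) ℝ := B.map (Int.cast) with hA
  have hAdet : A.det = (B.det : ℝ) := (RingHom.map_det (Int.castRingHom ℝ) B).symm
  have hAdet' : |A.det| = (d : ℝ) ^ 3 := by
    rw [hAdet, ← Int.cast_abs, Int.abs_eq_natAbs, hBdet]
    push_cast; ring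
  have hAunit : IsUnit ((Matrix.transpose A).det) := by
    rw [Matrix.det_transpose]
    refine isUnit_iff_ne_zero.mpr ?_
    intro h
    rw [h, abs_zero] at hAdet'
    have : (0:ℝ) < (d:ℝ)^3 := by positivity
    linarith
  -- the real basis
  set e : (Fin 3 → ℝ) ≃ₗ[ℝ] (Fin 3 → ℝ) := Matrix.toLinearEquiv' (Matrix.transpose A)
    (Matrix.invertibleOfIsUnitDet _ hAunit) with he
  set b : Basis (Fin 3) ℝ (Fin 3 → ℝ) := (Pi.basisFun ℝ (Fin 3)).map e with hb
  have hb_apply : ∀ i j, b i j = ((snf.bN i : Fin 3 → ℤ) j : ℝ) := by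
    intro i j
    have h1 : b i = Matrix.toLin' (Matrix.transpose A) (Pi.basisFun ℝ (Fin 3) i) := rfl
    rw [h1]
    simp [Matrix.toLin'_apply, Matrix.mulVec, dotProduct, Pi.basisFun_apply,
      Pi.single_apply, Finset.sum_ite_eq, hA, hB, mul_comm]
  -- the lattice
  set L : AddSubgroup (Fin 3 → ℝ) := (span ℤ (Set.range ⇑b)).toAddSubgroup with hL
  haveI : Countable L := inferInstanceAs (Countable (span ℤ (Set.range ⇑b)))
  have fund := ZSpan.isAddFundamentalDomain' b (volume : Measure (Fin 3 → ℝ))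
  have hvolF : volume (ZSpan.fundamentalDomain b) = ENNReal.ofReal ((d:ℝ)^3) := by
    rw [ZSpan.volume_fundamentalDomain]
    congr 1
    have : Matrix.of ⇑b = A := by
      ext i j
      rw [Matrix.of_apply, hb_apply i j]; simp [hA, hB]
    rw [this, hAdet']
  -- the convex body
  set r : ℝ := Real.sqrt 2 * d with hr
  have hr0 : 0 < r := by positivity
  set s : Set (Fin 3 → ℝ) :=
    ⇑(MeasurableEquiv.toLp 2 (Fin 3 → ℝ)) ⁻¹' (Metric.ball 0 r) with hs
  have h_symm : ∀ x ∈ s, -x ∈ s := by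
    intro x hx
    simp only [hs, Set.mem_preimage, mem_ball_zero_iff] at hx ⊢
    have : (MeasurableEquiv.toLp 2 (Fin 3 → ℝ)) (-x)
        = -((MeasurableEquiv.toLp 2 (Fin 3 → ℝ)) x) := rfl
    rw [this, norm_neg]; exact hx
  have h_conv : Convex ℝ s := by
    have : s = (WithLp.linearEquiv 2 ℝ (Fin 3 → ℝ)).symm ⁻¹' (Metric.ball 0 r) := rfl
    rw [this]
    exact (convex_ball 0 r).linear_preimage _
  have hvols : volume s = (ENNReal.ofReal r) ^ 3 *
      ENNReal.ofReal (Real.sqrt Real.pi ^ 3 / Real.Gamma (3 / 2 + 1)) := by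
    rw [hs, ← MeasurableEquiv.symm_symm (MeasurableEquiv.toLp 2 (Fin 3 → ℝ)), ((EuclideanSpace.volume_preserving_symm_measurableEquiv_toLp (Fin 3)).symm _).measure_preimage
      measurableSet_ball.nullMeasurableSet]
    simpa using EuclideanSpace.volume_ball (Fin 3) 0 r
  -- Minkowski
  have hlt : volume (ZSpan.fundamentalDomain b) * 2 ^ finrank ℝ (Fin 3 → ℝ) < volume s := by
    have hfr : finrank ℝ (Fin 3 → ℝ) = 3 := by simp
    rw [hvolF, hvols, hfr]
    have hG : Real.Gamma (3 / 2 + 1) = 3 / 4 * Real.sqrt Real.pi := by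
      rw [Real.Gamma_add_one (by norm_num), show (3:ℝ)/2 = 1/2 + 1 by norm_num,
        Real.Gamma_add_one (by norm_num), Real.Gamma_one_half_eq]
      ring
    have hsqrtpi : 0 < Real.sqrt Real.pi := Real.sqrt_pos.mpr Real.pi_pos
    have hQ : Real.sqrt Real.pi ^ 3 / Real.Gamma (3 / 2 + 1) = 4 / 3 * Real.pi := by
      rw [hG]
      have h2 : Real.sqrt Real.pi ^ 2 = Real.pi := Real.sq_sqrt Real.pi_pos.le
      field_simp
      nlinarith [h2, hsqrtpi]
    rw [hQ]
    have h2pow : (2 : ENNReal) ^ 3 = ENNReal.ofReal 8 := by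
      rw [show (8:ℝ) = ((8:ℕ):ℝ) by norm_num, ENNReal.ofReal_natCast]; norm_num
    rw [h2pow, ← ENNReal.ofReal_mul (by positivity), ← ENNReal.ofReal_pow hr0.le,
      ← ENNReal.ofReal_mul (by positivity)]
    refine ENNReal.ofReal_lt_ofReal_iff (by positivity) |>.mpr ?_
    have hrcube : r ^ 3 = 2 * Real.sqrt 2 * (d:ℝ)^3 := by
      have h3 : Real.sqrt 2 ^ 3 = 2 * Real.sqrt 2 := by
        rw [pow_succ, Real.sq_sqrt (by norm_num : (0:ℝ) ≤ 2)]
      rw [hr, mul_pow, h3]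
    rw [hrcube]
    have hs2 : (1:ℝ) ≤ Real.sqrt 2 := by
      rw [show (1:ℝ) = Real.sqrt 1 from (Real.sqrt_one).symm]
      exact Real.sqrt_le_sqrt (by norm_num)
    have hdpos : (0:ℝ) < (d:ℝ)^3 := by positivity
    have hpi := Real.pi_gt_three
    nlinarith [mul_le_mul_of_nonneg_right hs2 Real.pi_pos.le]
  obtain ⟨x, hx0, hxs⟩ :=
    exists_ne_zero_mem_lattice_of_measure_mul_two_pow_lt_measure fund h_symm h_conv hlt
  -- pull back to ℤ³
  have hxmem : (x : Fin 3 → ℝ) ∈ span ℤ (Set.range ⇑b) := x.2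
  rw [mem_span_range_iff_exists_fun] at hxmem
  obtain ⟨c, hc⟩ := hxmem
  set γ : Fin 3 → ℤ := ∑ i, c i • ((snf.bN i : Fin 3 → ℤ)) with hγ
  have hγΓ : γ ∈ Γ := by
    refine AddSubgroup.sum_mem Γ (fun i _ => AddSubgroup.zsmul_mem Γ ?_ (c i))
    exact (snf.bN i).2
  have hcast : ∀ j, ((γ j : ℤ) : ℝ) = (x : Fin 3 → ℝ) j := by
    intro j
    rw [← hc, Finset.sum_apply]
    rw [hγ, Finset.sum_apply]
    push_cast
    refine Finset.sum_congr rfl fun i _ => ?_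
    rw [Pi.smul_apply, Pi.smul_apply, hb_apply i j, zsmul_eq_mul, zsmul_eq_mul]
    push_cast
    ring
  have hγ0 : γ ≠ 0 := by
    intro h
    apply hx0
    have : (x : Fin 3 → ℝ) = 0 := by
      ext j; rw [← hcast j, h]; simp
    exact Subtype.ext this
  have hlt2 : dot3 γ γ < 2 * (d:ℤ)^2 := by
    have hxball : (MeasurableEquiv.toLp 2 (Fin 3 → ℝ)) (x : Fin 3 → ℝ) ∈
        Metric.ball (0 : EuclideanSpace ℝ (Fin 3)) r := hxs
    rw [mem_ball_zero_iff, EuclideanSpace.norm_eq] at hxball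
    have hcoord : ∀ i, ((MeasurableEquiv.toLp 2 (Fin 3 → ℝ)) (x : Fin 3 → ℝ)) i
        = (x : Fin 3 → ℝ) i := fun i => rfl
    have hsumlt : (∑ j, ((x : Fin 3 → ℝ) j) ^ 2) < 2 * (d:ℝ)^2 := by
      have h0 : (0:ℝ) ≤ ∑ j, ((x : Fin 3 → ℝ) j) ^ 2 := by positivity
      have h1 : Real.sqrt (∑ j, ((x : Fin 3 → ℝ) j) ^ 2) < r := by
        convert hxball using 2
        refine Finset.sum_congr rfl fun i _ => ?_
        rw [hcoord, Real.norm_eq_abs, sq_abs]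
      have h3 : (∑ j, ((x : Fin 3 → ℝ) j) ^ 2) < r ^ 2 :=
        (Real.sqrt_lt' hr0).mp h1
      calc (∑ j, ((x : Fin 3 → ℝ) j) ^ 2) < r ^ 2 := h3
        _ = 2 * (d:ℝ)^2 := by
            rw [hr, mul_pow, Real.sq_sqrt (by norm_num : (0:ℝ) ≤ 2)]
    have hdotcast : ((dot3 γ γ : ℤ) : ℝ) = ∑ j, ((x : Fin 3 → ℝ) j) ^ 2 := by
      rw [Fin.sum_univ_three]
      simp only [dot3]
      push_cast
      rw [hcast 0, hcast 1, hcast 2]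
      ring
    have : ((dot3 γ γ : ℤ) : ℝ) < 2 * (d:ℝ)^2 := by rw [hdotcast]; exact hsumlt
    exact_mod_cast this
  clear hc
  clear hγ
  clear_value γ
  have hpos : 0 < dot3 γ γ := by
    have h0 := mul_self_nonneg (γ 0)
    have h1 := mul_self_nonneg (γ 1)
    have h2 := mul_self_nonneg (γ 2)
    have key : γ 0 * γ 0 + γ 1 * γ 1 + γ 2 * γ 2 ≠ 0 := by
      intro hzero
      apply hγ0
      have e0 : γ 0 = 0 := by nlinarith
      have e1 : γ 1 = 0 := by nlinarith
      have e2 : γ 2 = 0 := by nlinarith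
      funext j
      fin_cases j <;> assumption
    unfold dot3
    exact lt_of_le_of_ne (by linarith) (Ne.symm key)
  obtain ⟨k, hk⟩ := hdot γ hγΓ γ hγΓ
  refine ⟨γ, hγΓ, ?_⟩
  have hd2 : (0:ℤ) < (d:ℤ)^2 := by positivity
  have hk1 : k = 1 := aux_k_eq_one ((d:ℤ)^2) k hd2 (hk ▸ hlt2) (hk ▸ hpos)
  rw [hk, hk1, mul_one]
end

section
/- For every vector v ∈ ℤ³ whose squared length ‖v‖² is divisible by d² for a positive integer d, there exists a cubic sublattice of ℤ³ with edge length d containing v. -/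
namespace CubicAux
open Quaternion

abbrev QH := Quaternion ℚ

/-- the pure quaternion attached to an integer vector -/
def qOf (v : Fin 3 → ℤ) : QH := ⟨0, v 0, v 1, v 2⟩

/-- Hurwitz integrality -/
def Hur (x : QH) : Prop :=
  ∃ a B C D : ℤ, x.re = a/2 ∧ x.imI = a/2 + B ∧ x.imJ = a/2 + C ∧ x.imK = a/2 + D

lemma hur_qOf (v : Fin 3 → ℤ) : Hur (qOf v) :=
  ⟨0, v 0, v 1, v 2, by simp [qOf], by simp [qOf], by simp [qOf], by simp [qOf]⟩

lemma hur_intCast (z : ℤ) : Hur ((z : ℚ) : QH) :=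
  ⟨2*z, -z, -z, -z, by simp <;> (push_cast; ring), by simp <;> (push_cast; ring),
    by simp <;> (push_cast; ring), by simp <;> (push_cast; ring)⟩

lemma hur_add {x y : QH} (hx : Hur x) (hy : Hur y) : Hur (x + y) := by
  obtain ⟨a, B, C, D, h1, h2, h3, h4⟩ := hx
  obtain ⟨e, F, G, H, g1, g2, g3, g4⟩ := hy
  exact ⟨a+e, B+F, C+G, D+H, by simp [h1, g1]; push_cast; ring,
    by simp [h2, g2]; push_cast; ring, by simp [h3, g3]; push_cast; ring,
    by simp [h4, g4]; push_cast; ring⟩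

lemma hur_neg {x : QH} (hx : Hur x) : Hur (-x) := by
  obtain ⟨a, B, C, D, h1, h2, h3, h4⟩ := hx
  exact ⟨-a, -B, -C, -D, by simp [h1]; push_cast; ring, by simp [h2]; push_cast; ring,
    by simp [h3]; push_cast; ring, by simp [h4]; push_cast; ring⟩

lemma hur_sub {x y : QH} (hx : Hur x) (hy : Hur y) : Hur (x - y) := by
  rw [sub_eq_add_neg]; exact hur_add hx (hur_neg hy)

lemma hur_star {x : QH} (hx : Hur x) : Hur (star x) := by
  obtain ⟨a, B, C, D, h1, h2, h3, h4⟩ := hx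
  exact ⟨a, -a-B, -a-C, -a-D, by simp [h1], by simp [h2]; push_cast; ring,
    by simp [h3]; push_cast; ring, by simp [h4]; push_cast; ring⟩

lemma hur_mul {x y : QH} (hx : Hur x) (hy : Hur y) : Hur (x * y) := by
  obtain ⟨a, B, C, D, h1, h2, h3, h4⟩ := hx
  obtain ⟨e, F, G, H, g1, g2, g3, g4⟩ := hy
  refine ⟨-2*B*F - B*e - 2*C*G - C*e - 2*D*H - D*e - F*a - G*a - H*a - a*e,
    B*F + B*e + C*G + C*H + C*e - D*G + D*H + F*a + H*a + a*e,
    B*F - B*H + C*G + C*e + D*F + D*H + D*e + F*a + G*a + a*e,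
    B*F + B*G + B*e - C*F + C*G + D*H + D*e + G*a + H*a + a*e,
    ?_, ?_, ?_, ?_⟩ <;>
  · simp only [re_mul, imI_mul, imJ_mul, imK_mul, h1, h2, h3, h4, g1, g2, g3, g4]
    push_cast
    ring

lemma hur_normSq {x : QH} (hx : Hur x) : ∃ N : ℕ, normSq x = (N : ℚ) := by
  obtain ⟨a, B, C, D, h1, h2, h3, h4⟩ := hx
  have h : normSq x = ((B*B + B*a + C*C + C*a + D*D + D*a + a*a : ℤ) : ℚ) := by
    rw [normSq_def', h1, h2, h3, h4]; push_cast; ring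
  have hnn : (0:ℚ) ≤ ((B*B + B*a + C*C + C*a + D*D + D*a + a*a : ℤ) : ℚ) := h ▸ normSq_nonneg
  have hnn' : 0 ≤ B*B + B*a + C*C + C*a + D*D + D*a + a*a := by exact_mod_cast hnn
  exact ⟨(B*B + B*a + C*C + C*a + D*D + D*a + a*a).toNat, by
    rw [h]; congr 1; omega⟩

lemma hur_pure_lip {x : QH} (hx : Hur x) (hre : x.re = 0) :
    ∃ w : Fin 3 → ℤ, qOf w = x := by
  obtain ⟨a, B, C, D, h1, h2, h3, h4⟩ := hx
  have ha : (a : ℚ) = 0 := by rw [h1] at hre; linarith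
  have ha' : a = 0 := by exact_mod_cast ha
  subst ha'
  refine ⟨![B, C, D], ?_⟩
  ext <;> simp [qOf, h2, h3, h4, hre]


lemma round_sq_le (t : ℚ) : (t - round t)^2 ≤ 1/4 := by
  have h := abs_sub_round t
  have h2 : -(1/2 : ℚ) ≤ t - round t ∧ t - round t ≤ 1/2 := abs_le.mp h
  nlinarith [h2.1, h2.2]

lemma round_sq_lt (t : ℚ) (h : ∀ k : ℤ, t ≠ k + 1/2) : (t - round t)^2 < 1/4 := by
  have hle := abs_le.mp (abs_sub_round t)
  have h1 : t - round t ≠ 1/2 := fun he => h (round t) (by linarith)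
  have h2 : t - round t ≠ -(1/2) := fun he => h (round t - 1) (by push_cast; linarith)
  have hlt : t - round t < 1/2 := lt_of_le_of_ne hle.2 h1
  have hgt : -(1/2) < t - round t := lt_of_le_of_ne hle.1 (Ne.symm h2)
  nlinarith

lemma hur_round (m : QH) : ∃ c : QH, Hur c ∧ normSq (m - c) < 1 := by
  by_cases hall : (∃ k : ℤ, m.re = k + 1/2) ∧ (∃ k : ℤ, m.imI = k + 1/2) ∧
      (∃ k : ℤ, m.imJ = k + 1/2) ∧ (∃ k : ℤ, m.imK = k + 1/2)
  · obtain ⟨⟨k1, e1⟩, ⟨k2, e2⟩, ⟨k3, e3⟩, ⟨k4, e4⟩⟩ := hall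
    refine ⟨m, ⟨2*k1+1, k2-k1, k3-k1, k4-k1, ?_, ?_, ?_, ?_⟩, by simp⟩
    · rw [e1]; push_cast; ring
    · rw [e2]; push_cast; ring
    · rw [e3]; push_cast; ring
    · rw [e4]; push_cast; ring
  · set c : QH := ⟨(round m.re : ℚ), (round m.imI : ℚ), (round m.imJ : ℚ), (round m.imK : ℚ)⟩
      with hc
    have hcH : Hur c := ⟨2 * round m.re, round m.imI - round m.re, round m.imJ - round m.re,
      round m.imK - round m.re, by simp [hc] <;> (push_cast; ring), by simp [hc] <;> (push_cast; ring),
      by simp [hc] <;> (push_cast; ring), by simp [hc] <;> (push_cast; ring)⟩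
    refine ⟨c, hcH, ?_⟩
    have hns : normSq (m - c) = (m.re - round m.re)^2 + (m.imI - round m.imI)^2
        + (m.imJ - round m.imJ)^2 + (m.imK - round m.imK)^2 := by
      rw [normSq_def']; simp only [re_sub, imI_sub, imJ_sub, imK_sub]; simp [hc]
    rw [hns]
    have b1 := round_sq_le m.re
    have b2 := round_sq_le m.imI
    have b3 := round_sq_le m.imJ
    have b4 := round_sq_le m.imK
    rcases not_and_or.mp hall with h | h
    · push_neg at h; nlinarith [round_sq_lt m.re h]
    rcases not_and_or.mp h with h | h
    · push_neg at h; nlinarith [round_sq_lt m.imI h]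
    rcases not_and_or.mp h with h | h
    · push_neg at h; nlinarith [round_sq_lt m.imJ h]
    · push_neg at h; nlinarith [round_sq_lt m.imK h]

lemma hur_div (x q : QH) (hq0 : q ≠ 0) :
    ∃ c : QH, Hur c ∧ normSq (x - c * q) < normSq q := by
  obtain ⟨c, hcH, hlt⟩ := hur_round (x * q⁻¹)
  refine ⟨c, hcH, ?_⟩
  have hx : x - c * q = (x * q⁻¹ - c) * q := by
    rw [sub_mul, mul_assoc, inv_mul_cancel₀ hq0, mul_one]
  rw [hx, map_mul]
  have hqpos : 0 < normSq q := lt_of_le_of_ne (normSq_nonneg) (Ne.symm (normSq_ne_zero.mpr hq0))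
  calc normSq (x * q⁻¹ - c) * normSq q < 1 * normSq q := by
        exact mul_lt_mul_of_pos_right hlt hqpos
    _ = normSq q := one_mul _

lemma re_conj (c m : QH) : (c * m * star c).re = normSq c * m.re := by
  simp only [re_mul, imI_mul, imJ_mul, imK_mul, re_star, imI_star, imJ_star, imK_star,
    normSq_def']
  ring

lemma qOf_re (v : Fin 3 → ℤ) : (qOf v).re = 0 := rfl

lemma star_qOf (v : Fin 3 → ℤ) : star (qOf v) = - qOf v := by
  ext <;> simp only [re_star, imI_star, imJ_star, imK_star, re_neg, imI_neg, imJ_neg, imK_neg] <;> simp [qOf]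

lemma qOf_add (v w : Fin 3 → ℤ) : qOf (v + w) = qOf v + qOf w := by
  ext <;> simp only [re_add, imI_add, imJ_add, imK_add] <;> simp [qOf]

lemma qOf_smul (z : ℤ) (v : Fin 3 → ℤ) : qOf (z • v) = (z : ℚ) • qOf v := by
  ext <;> simp only [re_smul, imI_smul, imJ_smul, imK_smul] <;> simp [qOf]

lemma qOf_inj {v w : Fin 3 → ℤ} (h : qOf v = qOf w) : v = w := by
  funext i
  have h1 := congrArg QuaternionAlgebra.imI h
  have h2 := congrArg QuaternionAlgebra.imJ h
  have h3 := congrArg QuaternionAlgebra.imK h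
  simp only [qOf] at h1 h2 h3
  fin_cases i
  · exact_mod_cast h1
  · exact_mod_cast h2
  · exact_mod_cast h3

lemma normSq_qOf (v : Fin 3 → ℤ) : normSq (qOf v) = ((dot3 v v : ℤ) : ℚ) := by
  rw [normSq_def']; simp [qOf, dot3]; push_cast; ring

lemma dot3_re (v w : Fin 3 → ℤ) : ((dot3 v w : ℤ) : ℚ) = -(qOf v * qOf w).re := by
  rw [re_mul]; simp [qOf, dot3]; push_cast; ring

lemma qOf_mul_self (v : Fin 3 → ℤ) : qOf v * qOf v = -(((dot3 v v : ℤ) : ℚ) : QH) := by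
  have h : (qOf v)^2 = -normSq (qOf v) := sq_eq_neg_normSq.mpr (qOf_re v)
  rw [sq] at h
  rw [h, normSq_qOf]


lemma hur_coe_int (z : ℤ) : Hur ((Quaternion.coe ((z : ℚ)) : QH)) :=
  ⟨2*z, -z, -z, -z, by rw [re_coe]; push_cast; ring, by rw [imI_coe]; push_cast; ring,
    by rw [imJ_coe]; push_cast; ring, by rw [imK_coe]; push_cast; ring⟩

lemma hur_one : Hur (1 : QH) := by
  have := hur_coe_int 1; rwa [Int.cast_one, coe_one] at this

lemma hur_zero : Hur (0 : QH) := by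
  have := hur_coe_int 0; rwa [Int.cast_zero, coe_zero] at this

lemma key (p : ℕ) (hp : p.Prime) (v : Fin 3 → ℤ)
    (hnd : ¬ ((p:ℤ) ∣ v 0 ∧ (p:ℤ) ∣ v 1 ∧ (p:ℤ) ∣ v 2))
    (n : ℤ) (hn : dot3 v v = (p:ℤ)^2 * n) :
    ∃ (w : Fin 3 → ℤ) (F : (Fin 3 → ℤ) → (Fin 3 → ℤ)),
      dot3 w w = n ∧ F w = v ∧
      (∀ a b, F (a + b) = F a + F b) ∧
      (∀ (z : ℤ) (a : Fin 3 → ℤ), F (z • a) = z • F a) ∧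
      (∀ a b, dot3 (F a) (F b) = (p:ℤ)^2 * dot3 a b) := by
  classical
  have hp0 : (p:ℚ) ≠ 0 := Nat.cast_ne_zero.mpr hp.ne_zero
  set V : QH := qOf v with hV
  set P : QH := (Quaternion.coe ((p:ℚ)) : QH) with hP
  have hP0 : P ≠ 0 := by
    rw [hP, ne_eq, ← coe_zero, coe_inj]
    exact hp0
  have hurP : Hur P := by have := hur_coe_int (p:ℤ); rwa [Int.cast_natCast] at this
  have hurV : Hur V := hur_qOf v
  have hSHur : ∀ x : QH, (∃ s t : QH, Hur s ∧ Hur t ∧ x = s * V + t * P) → Hur x := by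
    rintro x ⟨s, t, hs, ht, rfl⟩
    exact hur_add (hur_mul hs hurV) (hur_mul ht hurP)
  have hSV : ∃ s t : QH, Hur s ∧ Hur t ∧ V = s * V + t * P :=
    ⟨1, 0, hur_one, hur_zero, by noncomm_ring⟩
  have hSP : ∃ s t : QH, Hur s ∧ Hur t ∧ P = s * V + t * P :=
    ⟨0, 1, hur_zero, hur_one, by noncomm_ring⟩
  have hSsub : ∀ x y : QH, (∃ s t : QH, Hur s ∧ Hur t ∧ x = s * V + t * P) →
      (∃ s t : QH, Hur s ∧ Hur t ∧ y = s * V + t * P) →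
      (∃ s t : QH, Hur s ∧ Hur t ∧ x - y = s * V + t * P) := by
    rintro x y ⟨s, t, hs, ht, rfl⟩ ⟨s', t', hs', ht', rfl⟩
    exact ⟨s - s', t - t', hur_sub hs hs', hur_sub ht ht', by noncomm_ring⟩
  have hSmul : ∀ (c x : QH), Hur c → (∃ s t : QH, Hur s ∧ Hur t ∧ x = s * V + t * P) →
      (∃ s t : QH, Hur s ∧ Hur t ∧ c * x = s * V + t * P) := by
    rintro c x hc ⟨s, t, hs, ht, rfl⟩
    exact ⟨c * s, c * t, hur_mul hc hs, hur_mul hc ht, by noncomm_ring⟩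
  have hNv : normSq V = (p:ℚ)^2 * (n:ℚ) := by
    rw [hV, normSq_qOf, hn]; push_cast; ring
  have hSnormdvd : ∀ x : QH, (∃ s t : QH, Hur s ∧ Hur t ∧ x = s * V + t * P) →
      ∃ N : ℕ, normSq x = (N:ℚ) ∧ (p:ℤ) ∣ (N:ℤ) := by
    rintro x hxS
    obtain ⟨N, hN⟩ := hur_normSq (hSHur x hxS)
    refine ⟨N, hN, ?_⟩
    obtain ⟨s, t, hs, ht, rfl⟩ := hxS
    obtain ⟨Ns, hNs⟩ := hur_normSq hs
    obtain ⟨Nt, hNt⟩ := hur_normSq ht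
    obtain ⟨ar, B1, C1, D1, har, -, -, -⟩ := hur_mul (hur_mul hs hurV) (hur_star ht)
    have hcross : ((s * V) * star (t * P)).re = (p:ℚ) * ((ar:ℚ)/2) := by
      have h1 : (s * V) * star (t * P) = (p:ℚ) • ((s * V) * star t) := by
        rw [hP, star_mul, star_coe, coe_mul_eq_smul, mul_smul_comm]
      rw [h1, re_smul, smul_eq_mul, har]
    have hns : (N:ℚ) = (p:ℚ) * ((p:ℚ) * (n:ℚ) * (Ns:ℚ) + (p:ℚ) * (Nt:ℚ) + (ar:ℚ)) := by
      rw [← hN, normSq_add, map_mul, map_mul, hNs, hNt, hNv, hcross, hP, normSq_coe]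
      field_simp
    have hns' : (N:ℤ) = (p:ℤ) * ((p:ℤ) * n * (Ns:ℤ) + (p:ℤ) * (Nt:ℤ) + ar) := by
      exact_mod_cast hns
    exact ⟨_, hns'⟩
  have hTne : ∃ k : ℕ, ∃ x : QH, (∃ s t : QH, Hur s ∧ Hur t ∧ x = s * V + t * P) ∧
      x ≠ 0 ∧ normSq x = (k:ℚ) :=
    ⟨p * p, P, hSP, hP0, by rw [hP, normSq_coe]; push_cast; ring⟩
  set k0 := Nat.find hTne with hk0def
  obtain ⟨q, hSq, hq0, hqnorm⟩ := Nat.find_spec hTne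
  rw [← hk0def] at hqnorm
  have hqH : Hur q := hSHur q hSq
  have hdvd : ∀ x : QH, (∃ s t : QH, Hur s ∧ Hur t ∧ x = s * V + t * P) →
      ∃ c, Hur c ∧ x = c * q := by
    intro x hxS
    obtain ⟨c, hcH, hlt⟩ := hur_div x q hq0
    rcases eq_or_ne (x - c * q) 0 with h0 | h0
    · exact ⟨c, hcH, by rw [← sub_eq_zero]; exact h0⟩
    · exfalso
      have hrS := hSsub _ _ hxS (hSmul c q hcH hSq)
      obtain ⟨Nr, hNr⟩ := hur_normSq (hSHur _ hrS)
      have hNrlt : Nr < k0 := by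
        have hq2 : (Nr:ℚ) < (k0:ℚ) := by rw [← hNr, ← hqnorm]; exact hlt
        exact_mod_cast hq2
      exact Nat.find_min hTne hNrlt ⟨x - c * q, hrS, h0, hNr⟩
  obtain ⟨Nq, hNq, hpNq⟩ := hSnormdvd q hSq
  have hNqk0 : Nq = k0 := by
    have h := hNq.symm.trans hqnorm
    exact_mod_cast h
  have hk0p : (p:ℤ) ∣ (k0:ℤ) := hNqk0 ▸ hpNq
  obtain ⟨cP, hcPH, hcPq⟩ := hdvd P hSP
  obtain ⟨NcP, hNcP⟩ := hur_normSq hcPH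
  have hppk0 : p ^ 2 = NcP * k0 := by
    have hc : ((p:ℚ))^2 = (NcP:ℚ) * (k0:ℚ) := by
      calc ((p:ℚ))^2 = normSq P := by rw [hP, normSq_coe]
        _ = normSq cP * normSq q := by rw [hcPq, map_mul]
        _ = (NcP:ℚ) * (k0:ℚ) := by rw [hNcP, hqnorm]
    exact_mod_cast hc
  have hk0cases : k0 = p ∨ k0 = p * p := by
    have hpk0 : p ∣ k0 := Int.natCast_dvd_natCast.mp hk0p
    obtain ⟨m1, hm1⟩ := hpk0
    have hk0dvd : k0 ∣ p * p := ⟨NcP, by rw [← pow_two, hppk0, Nat.mul_comm]⟩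
    rw [hm1] at hk0dvd ⊢
    have hm1p : m1 ∣ p := by
      have := (mul_dvd_mul_iff_left (a := (p:ℕ)) (by exact_mod_cast hp.ne_zero)).mp hk0dvd
      exact this
    rcases (Nat.Prime.eq_one_or_self_of_dvd hp m1 hm1p) with h | h
    · left; rw [h, mul_one]
    · right; rw [h]
  have hk0 : k0 = p := by
    rcases hk0cases with h | h
    · exact h
    exfalso
    have hpp0 : 0 < p * p := Nat.mul_pos hp.pos hp.pos
    have hNcP1 : NcP = 1 := by rw [h, ← pow_two] at hppk0; nlinarith [hppk0, hpp0, Nat.pos_of_ne_zero hp.ne_zero]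
    have h1 : star cP * cP = 1 := by
      have h2 := star_mul_self cP
      rw [hNcP, hNcP1] at h2
      rw [h2]; norm_num
    have hq_eq2 : q = star cP * P := by
      rw [hcPq, ← mul_assoc, h1, one_mul]
    obtain ⟨u, huH, hVu⟩ := hdvd V hSV
    have hVP : V = P * (u * star cP) := by
      rw [hVu, hq_eq2, ← mul_assoc, hP, coe_commutes]
    have hh'H : Hur (u * star cP) := hur_mul huH (hur_star hcPH)
    have hh're : (u * star cP).re = 0 := by
      have hre : V.re = (p:ℚ) * (u * star cP).re := by
        rw [hVP, hP]
        rw [coe_mul_eq_smul, re_smul, smul_eq_mul]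
      rw [hV] at hre
      have : (qOf v).re = 0 := qOf_re v
      rw [this] at hre
      rcases mul_eq_zero.mp hre.symm with h | h
      · exact absurd h hp0
      · exact h
    obtain ⟨w', hw'⟩ := hur_pure_lip hh'H hh're
    rw [← hw'] at hVP
    apply hnd
    have hcomp : ∀ i : Fin 3, (v i : ℚ) = (p:ℚ) * (w' i : ℚ) := by
      intro i
      have hI := congrArg QuaternionAlgebra.imI hVP
      have hJ := congrArg QuaternionAlgebra.imJ hVP
      have hK := congrArg QuaternionAlgebra.imK hVP
      rw [hV] at hI hJ hK
      simp only [hP, coe_mul_eq_smul, imI_smul, imJ_smul, imK_smul, smul_eq_mul] at hI hJ hK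
      simp only [qOf] at hI hJ hK
      fin_cases i
      · exact hI
      · exact hJ
      · exact hK
    refine ⟨⟨w' 0, ?_⟩, ⟨w' 1, ?_⟩, ⟨w' 2, ?_⟩⟩ <;> exact_mod_cast hcomp _
  -- now normSq q = p
  have hqn : normSq q = (p:ℚ) := by rw [hqnorm, hk0]
  have hqs1 : q * star q = P := by rw [self_mul_star, hqn, hP]
  have hqs2 : star q * q = P := by rw [star_mul_self, hqn, hP]
  obtain ⟨x, y, hxH, hyH, hq_eq⟩ := hSq
  obtain ⟨u, huH, hVu⟩ := hdvd V hSV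
  have hVsq : V * star q = u * P := by rw [hVu, mul_assoc, hqs1]
  have hVre : V.re = 0 := qOf_re v
  have hVV := sq_eq_neg_normSq.mpr hVre
  rw [sq, hNv] at hVV
  set w0 : QH := y * u - (Quaternion.coe ((n:ℚ)) : QH) * (x * star q) with hw0
  have hmain : q * V * star q = P^2 * w0 := by
    have e1 : q * V * star q = x * (V * V) * star q + y * (P * (V * star q)) := by
      rw [hq_eq]; noncomm_ring
    rw [e1, hVV, hVsq, hw0, hP]
    simp only [pow_two, mul_neg, neg_mul, mul_coe_eq_smul, coe_mul_eq_smul,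
      smul_mul_assoc, mul_smul_comm, smul_smul, mul_sub, sub_eq_add_neg, smul_neg,
      neg_smul]
    module
  have hw0H : Hur w0 := by
    rw [hw0]
    exact hur_sub (hur_mul hyH huH) (hur_mul (hur_coe_int n) (hur_mul hxH (hur_star hqH)))
  have hzre : (q * V * star q).re = 0 := by rw [re_conj, hVre, mul_zero]
  have hw0re : w0.re = 0 := by
    have h1 : (P^2 * w0).re = (p:ℚ)^2 * w0.re := by
      rw [hP, ← coe_pow, coe_mul_eq_smul, re_smul, smul_eq_mul]
    rw [← hmain, hzre] at h1
    rcases mul_eq_zero.mp h1.symm with h | h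
    · exact absurd (pow_eq_zero_iff (two_ne_zero)|>.mp h) hp0
    · exact h
  obtain ⟨w, hw⟩ := hur_pure_lip hw0H hw0re
  have hnormw0 : normSq w0 = (n:ℚ) := by
    have h1 : normSq (q * V * star q) = (p:ℚ)^4 * (n:ℚ) := by
      rw [map_mul, map_mul, normSq_star, hqn, hNv]; ring
    have h2 : normSq (P^2 * w0) = (p:ℚ)^4 * normSq w0 := by
      rw [map_mul, map_pow, hP, normSq_coe]; ring
    rw [hmain, h2] at h1
    exact mul_left_cancel₀ (pow_ne_zero 4 hp0) h1
  have hdotww : dot3 w w = n := by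
    have hc : ((dot3 w w : ℤ) : ℚ) = ((n : ℤ) : ℚ) := by
      rw [← normSq_qOf, hw, hnormw0]
    exact_mod_cast hc
  have hback : star q * w0 * q = V := by
    have h1 : star q * (q * V * star q) * q = P^2 * V := by
      calc star q * (q * V * star q) * q = (star q * q) * V * (star q * q) := by noncomm_ring
        _ = P * V * P := by rw [hqs2]
        _ = P^2 * V := by
            rw [hP]
            simp only [pow_two, mul_coe_eq_smul, coe_mul_eq_smul, smul_mul_assoc,
              mul_smul_comm, smul_smul]
    have h2 : star q * (P^2 * w0) * q = P^2 * (star q * w0 * q) := by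
      rw [hP]
      simp only [pow_two, mul_coe_eq_smul, coe_mul_eq_smul, smul_mul_assoc,
        mul_smul_comm, smul_smul]
    rw [hmain, h2] at h1
    exact mul_left_cancel₀ (pow_ne_zero 2 hP0) h1
  have hconj : ∀ a : Fin 3 → ℤ, ∃ b : Fin 3 → ℤ, qOf b = star q * qOf a * q := by
    intro a
    apply hur_pure_lip (hur_mul (hur_mul (hur_star hqH) (hur_qOf a)) hqH)
    have h := re_conj (star q) (qOf a)
    rw [star_star, normSq_star, hqn, qOf_re, mul_zero] at h
    exact h
  choose F hF using hconj
  refine ⟨w, F, hdotww, ?_, ?_, ?_, ?_⟩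
  · apply qOf_inj
    rw [hF, hw, hback, hV]
  · intro a b
    apply qOf_inj
    rw [qOf_add, hF, hF, hF, qOf_add]
    noncomm_ring
  · intro z a
    apply qOf_inj
    rw [hF, qOf_smul, qOf_smul, hF]
    simp only [mul_smul_comm, smul_mul_assoc]
  · intro a b
    have hcalc : ((dot3 (F a) (F b) : ℤ) : ℚ) = (p:ℚ)^2 * ((dot3 a b : ℤ) : ℚ) := by
      rw [dot3_re, hF, hF]
      have h1 : (star q * qOf a * q) * (star q * qOf b * q)
          = (p:ℚ) • (star q * (qOf a * qOf b) * q) := by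
        calc (star q * qOf a * q) * (star q * qOf b * q)
            = star q * qOf a * (q * star q) * qOf b * q := by noncomm_ring
          _ = star q * qOf a * P * qOf b * q := by rw [hqs1]
          _ = (p:ℚ) • (star q * (qOf a * qOf b) * q) := by
              rw [hP]
              simp only [mul_coe_eq_smul, coe_mul_eq_smul, smul_mul_assoc, mul_smul_comm,
                mul_assoc]
      rw [h1, re_smul, smul_eq_mul]
      have h2 := re_conj (star q) (qOf a * qOf b)
      rw [star_star, normSq_star, hqn] at h2
      rw [h2, dot3_re]
      ring
    exact_mod_cast hcalc


lemma dot3_zsmul (z z' : ℤ) (a b : Fin 3 → ℤ) :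
    dot3 (z • a) (z' • b) = z * z' * dot3 a b := by
  simp [dot3, Pi.smul_apply, smul_eq_mul]; ring

lemma aux : ∀ d : ℕ, 0 < d → ∀ v : Fin 3 → ℤ, ((d:ℤ)^2 ∣ dot3 v v) →
    ∃ a b c : Fin 3 → ℤ, dot3 a b = 0 ∧ dot3 a c = 0 ∧ dot3 b c = 0 ∧
      dot3 a a = (d:ℤ)^2 ∧ dot3 b b = (d:ℤ)^2 ∧ dot3 c c = (d:ℤ)^2 ∧
      ∃ α β γ : ℤ, v = α • a + β • b + γ • c := by
  intro d
  induction d using Nat.strong_induction_on with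
  | _ d ih =>
  intro hd v hdvd
  rcases eq_or_ne d 1 with rfl | hd1
  · refine ⟨![1,0,0], ![0,1,0], ![0,0,1], by simp [dot3], by simp [dot3], by simp [dot3],
      by simp [dot3], by simp [dot3], by simp [dot3], v 0, v 1, v 2, ?_⟩
    funext i
    fin_cases i <;> simp
  · obtain ⟨p, hp, hpd⟩ := Nat.exists_prime_and_dvd hd1
    obtain ⟨e, rfl⟩ := hpd
    have hp2 : 2 ≤ p := hp.two_le
    have he0 : 0 < e := by
      rcases Nat.eq_zero_or_pos e with h | h
      · subst h; simp at hd
      · exact h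
    have helt : e < p * e := by
      have h2 : 2 * e ≤ p * e := Nat.mul_le_mul_right e hp2
      omega
    by_cases hv : ((p:ℤ) ∣ v 0 ∧ (p:ℤ) ∣ v 1 ∧ (p:ℤ) ∣ v 2)
    · obtain ⟨⟨k0, h0⟩, ⟨k1, h1⟩, ⟨k2, h2⟩⟩ := hv
      set w : Fin 3 → ℤ := ![k0, k1, k2] with hwdef
      have hvw : v = (p:ℤ) • w := by
        funext i; fin_cases i <;> simp [hwdef, h0, h1, h2]
      have hdot : dot3 v v = (p:ℤ)^2 * dot3 w w := by
        rw [hvw, dot3_zsmul]; ring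
      have hdvdw : (e:ℤ)^2 ∣ dot3 w w := by
        obtain ⟨m, hm⟩ := hdvd
        refine ⟨m, ?_⟩
        have hpne : ((p:ℤ))^2 ≠ 0 := by positivity
        apply mul_left_cancel₀ hpne
        rw [← hdot, hm]; push_cast; ring
      obtain ⟨a, b, c, d1, d2, d3, d4, d5, d6, α, β, γ, hcomb⟩ := ih e helt he0 w hdvdw
      refine ⟨(p:ℤ) • a, (p:ℤ) • b, (p:ℤ) • c, ?_, ?_, ?_, ?_, ?_, ?_, α, β, γ, ?_⟩
      · rw [dot3_zsmul, d1, mul_zero]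
      · rw [dot3_zsmul, d2, mul_zero]
      · rw [dot3_zsmul, d3, mul_zero]
      · rw [dot3_zsmul, d4]; push_cast; ring
      · rw [dot3_zsmul, d5]; push_cast; ring
      · rw [dot3_zsmul, d6]; push_cast; ring
      · rw [hvw, hcomb]; module
    · obtain ⟨m, hm⟩ := hdvd
      obtain ⟨w, F, hww, hFw, hFadd, hFsmul, hFdot⟩ := key p hp v hv ((e:ℤ)^2 * m)
        (by rw [hm]; push_cast; ring)
      have hdvdw : (e:ℤ)^2 ∣ dot3 w w := ⟨m, hww⟩
      obtain ⟨a, b, c, d1, d2, d3, d4, d5, d6, α, β, γ, hcomb⟩ := ih e helt he0 w hdvdw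
      refine ⟨F a, F b, F c, ?_, ?_, ?_, ?_, ?_, ?_, α, β, γ, ?_⟩
      · rw [hFdot, d1, mul_zero]
      · rw [hFdot, d2, mul_zero]
      · rw [hFdot, d3, mul_zero]
      · rw [hFdot, d4]; push_cast; ring
      · rw [hFdot, d5]; push_cast; ring
      · rw [hFdot, d6]; push_cast; ring
      · calc v = F w := hFw.symm
          _ = F (α • a) + (F (β • b) + F (γ • c)) := by
              rw [hcomb, hFadd, hFadd, add_assoc]
          _ = α • F a + (β • F b + γ • F c) := by rw [hFsmul, hFsmul, hFsmul]
          _ = α • F a + β • F b + γ • F c := by rw [add_assoc]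

end CubicAux

/-- Existence part of the main theorem: every `v ∈ ℤ³` with `d² ∣ ‖v‖²` lies in
some cubic sublattice of edge length `d`. -/
theorem exists_cubic_sublattice (v : Fin 3 → ℤ) (d : ℕ) (hd : 0 < d)
    (hdvd : (d : ℤ)^2 ∣ dot3 v v) :
    ∃ Γ : AddSubgroup (Fin 3 → ℤ), IsCubicLattice Γ d ∧ v ∈ Γ := by
  obtain ⟨a, b, c, d1, d2, d3, d4, d5, d6, α, β, γ, hcomb⟩ := CubicAux.aux d hd v hdvd
  refine ⟨AddSubgroup.closure {a, b, c}, ⟨a, b, c, rfl, d1, d2, d3, d4, d5, d6⟩, ?_⟩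
  have ha : a ∈ AddSubgroup.closure {a, b, c} := AddSubgroup.subset_closure (by simp)
  have hb : b ∈ AddSubgroup.closure {a, b, c} := AddSubgroup.subset_closure (by simp)
  have hc : c ∈ AddSubgroup.closure {a, b, c} := AddSubgroup.subset_closure (by simp)
  rw [hcomb]
  exact add_mem (add_mem (AddSubgroup.zsmul_mem _ ha α) (AddSubgroup.zsmul_mem _ hb β))
    (AddSubgroup.zsmul_mem _ hc γ)
end

section
/- If v ∈ ℤ³ is primitive and d² divides ‖v‖², then the cubic sublattice with edge length d containing v is unique: any two subgroups of ℤ³ each admitting a basis of three pairwise orthogonal vectors of length d and each containing v are equal. -/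
lemma dot3_comm (a b : Fin 3 → ℤ) : dot3 a b = dot3 b a := by unfold dot3; ring

lemma cramer3 (a b c w : Fin 3 → ℤ) (i : Fin 3) :
    dot3 (cross3 a b) c * w i =
      dot3 w (cross3 b c) * a i + dot3 w (cross3 c a) * b i + dot3 w (cross3 a b) * c i := by
  fin_cases i <;> simp [dot3, cross3] <;> ring

lemma binet3 (a b c e : Fin 3 → ℤ) :
    dot3 (cross3 a b) (cross3 c e) = dot3 a c * dot3 b e - dot3 a e * dot3 b c := by
  simp [dot3, cross3]; ring

lemma det3_cyclic (a b c : Fin 3 → ℤ) : dot3 (cross3 a b) c = dot3 (cross3 b c) a := by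
  simp [dot3, cross3]; ring

lemma cross_combo (a b c x y : Fin 3 → ℤ) (p q r α β γ : ℤ)
    (hx : ∀ i, x i = p * a i + q * b i + r * c i)
    (hy : ∀ i, y i = α * a i + β * b i + γ * c i) (i : Fin 3) :
    cross3 x y i = (p*β - q*α) * cross3 a b i + (q*γ - r*β) * cross3 b c i
      + (r*α - p*γ) * cross3 c a i := by
  fin_cases i <;> simp [cross3, hx, hy] <;> ring

lemma dot_combo (a b c x y : Fin 3 → ℤ) (p q r α β γ : ℤ)
    (hx : ∀ i, x i = p * a i + q * b i + r * c i)
    (hy : ∀ i, y i = α * a i + β * b i + γ * c i) :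
    dot3 x y = (p*α) * dot3 a a + (q*β) * dot3 b b + (r*γ) * dot3 c c
      + (p*β+q*α) * dot3 a b + (p*γ+r*α) * dot3 a c + (q*γ+r*β) * dot3 b c := by
  simp only [dot3]; rw [hx 0, hx 1, hx 2, hy 0, hy 1, hy 2]; ring

lemma cubic_facts (a b c : Fin 3 → ℤ) (d : ℕ) (hd : 0 < d)
    (hab : dot3 a b = 0) (hac : dot3 a c = 0) (hbc : dot3 b c = 0)
    (haa : dot3 a a = (d:ℤ)^2) (hbb : dot3 b b = (d:ℤ)^2) (hcc : dot3 c c = (d:ℤ)^2) :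
    ∃ ε : ℤ, ε^2 = 1 ∧ (∀ i, cross3 a b i = ε * d * c i) ∧
      (∀ i, cross3 b c i = ε * d * a i) ∧ (∀ i, cross3 c a i = ε * d * b i) := by
  have hdz : (d:ℤ) ≠ 0 := Int.natCast_ne_zero.mpr hd.ne'
  set D := dot3 (cross3 a b) c with hD
  have h1 : ∀ i, D * cross3 b c i = (d:ℤ)^4 * a i := by
    intro i
    have h := cramer3 a b c (cross3 b c) i
    rw [binet3 b c b c, binet3 b c c a, binet3 b c a b] at h
    rw [dot3_comm c b, dot3_comm c a, dot3_comm b a] at h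
    rw [hab, hac, hbc, hbb, hcc] at h
    linear_combination h
  have h2 : ∀ i, D * cross3 c a i = (d:ℤ)^4 * b i := by
    intro i
    have h := cramer3 a b c (cross3 c a) i
    rw [binet3 c a b c, binet3 c a c a, binet3 c a a b] at h
    rw [dot3_comm c b, dot3_comm c a] at h
    rw [hab, hac, hbc, haa, hcc] at h
    linear_combination h
  have h3 : ∀ i, D * cross3 a b i = (d:ℤ)^4 * c i := by
    intro i
    have h := cramer3 a b c (cross3 a b) i
    rw [binet3 a b b c, binet3 a b c a, binet3 a b a b] at h
    rw [dot3_comm b a] at h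
    rw [hab, hac, hbc, haa, hbb] at h
    linear_combination h
  have hDsq : D ^ 2 = (d:ℤ)^6 := by
    have key : D * dot3 (cross3 b c) a = (d:ℤ)^4 * dot3 a a := by
      simp only [dot3]
      linear_combination (a 0) * h1 0 + (a 1) * h1 1 + (a 2) * h1 2
    rw [haa] at key
    have : D ^ 2 = D * dot3 (cross3 b c) a := by
      rw [pow_two]; congr 1; rw [hD, det3_cyclic]
    rw [this, key]; ring
  have hsplit : (D - (d:ℤ)^3) * (D + (d:ℤ)^3) = 0 := by linear_combination hDsq
  obtain ⟨ε, hε2, hεD⟩ : ∃ ε : ℤ, ε^2 = 1 ∧ D = ε * (d:ℤ)^3 := by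
    rcases mul_eq_zero.mp hsplit with h | h
    · exact ⟨1, by ring, by linarith⟩
    · exact ⟨-1, by ring, by linarith⟩
  have hd3 : ((d:ℤ)^3) ≠ 0 := pow_ne_zero 3 hdz
  refine ⟨ε, hε2, fun i => ?_, fun i => ?_, fun i => ?_⟩
  · apply mul_left_cancel₀ hd3
    have := h3 i; rw [hεD] at this
    linear_combination ε * this - (d:ℤ)^3 * cross3 a b i * hε2
  · apply mul_left_cancel₀ hd3
    have := h1 i; rw [hεD] at this
    linear_combination ε * this - (d:ℤ)^3 * cross3 b c i * hε2
  · apply mul_left_cancel₀ hd3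
    have := h2 i; rw [hεD] at this
    linear_combination ε * this - (d:ℤ)^3 * cross3 c a i * hε2

lemma mem_closure_triple {a b c : Fin 3 → ℤ} (x : Fin 3 → ℤ) :
    x ∈ AddSubgroup.closure {a, b, c} ↔
      ∃ p q r : ℤ, ∀ i, x i = p * a i + q * b i + r * c i := by
  constructor
  · intro hx
    induction hx using AddSubgroup.closure_induction with
    | mem z hz =>
      rcases hz with h | h | h
      · exact ⟨1, 0, 0, fun i => by simp [h]⟩
      · exact ⟨0, 1, 0, fun i => by simp [h]⟩
      · exact ⟨0, 0, 1, fun i => by simp [Set.mem_singleton_iff.mp h]⟩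
    | zero => exact ⟨0, 0, 0, fun i => by simp⟩
    | add x y hx hy ihx ihy =>
      obtain ⟨p, q, r, hp⟩ := ihx
      obtain ⟨p', q', r', hp'⟩ := ihy
      exact ⟨p + p', q + q', r + r', fun i => by
        simp only [Pi.add_apply, hp i, hp' i]; ring⟩
    | neg x hx ihx =>
      obtain ⟨p, q, r, hp⟩ := ihx
      exact ⟨-p, -q, -r, fun i => by simp only [Pi.neg_apply, hp i]; ring⟩
  · rintro ⟨p, q, r, h⟩
    have hx : x = p • a + q • b + r • c := by
      funext i
      simp only [Pi.add_apply, Pi.smul_apply, smul_eq_mul]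
      exact h i
    rw [hx]
    have ha : a ∈ AddSubgroup.closure ({a, b, c} : Set (Fin 3 → ℤ)) :=
      AddSubgroup.subset_closure (by simp)
    have hb : b ∈ AddSubgroup.closure ({a, b, c} : Set (Fin 3 → ℤ)) :=
      AddSubgroup.subset_closure (by simp)
    have hc : c ∈ AddSubgroup.closure ({a, b, c} : Set (Fin 3 → ℤ)) :=
      AddSubgroup.subset_closure (by simp)
    exact add_mem (add_mem (AddSubgroup.zsmul_mem _ ha p) (AddSubgroup.zsmul_mem _ hb q))
      (AddSubgroup.zsmul_mem _ hc r)

lemma cubic_main (d : ℕ) (hd : 0 < d) (a b c v : Fin 3 → ℤ)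
    (Γ : AddSubgroup (Fin 3 → ℤ)) (hΓ : Γ = AddSubgroup.closure {a, b, c})
    (hab : dot3 a b = 0) (hac : dot3 a c = 0) (hbc : dot3 b c = 0)
    (haa : dot3 a a = (d:ℤ)^2) (hbb : dot3 b b = (d:ℤ)^2) (hcc : dot3 c c = (d:ℤ)^2)
    (hvΓ : v ∈ Γ) :
    (∀ x ∈ Γ, (d:ℤ)^2 ∣ dot3 v x ∧ ∀ i, (d:ℤ) ∣ cross3 v x i) ∧
    (∀ (σ : ℤ) (w y x : Fin 3 → ℤ),
      (∀ i, x i = σ * v i + d * cross3 v w i + (d:ℤ)^2 * y i) → x ∈ Γ) := by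
  have hdz : (d:ℤ) ≠ 0 := Int.natCast_ne_zero.mpr hd.ne'
  obtain ⟨ε, hε2, hab', hbc', hca'⟩ := cubic_facts a b c d hd hab hac hbc haa hbb hcc
  have hεz : ε ≠ 0 := by intro h; rw [h] at hε2; simp at hε2
  subst hΓ
  obtain ⟨p, q, r, hv⟩ := (mem_closure_triple v).mp hvΓ
  constructor
  · intro x hx
    obtain ⟨α, β, γ, hx'⟩ := (mem_closure_triple x).mp hx
    constructor
    · have h := dot_combo a b c v x p q r α β γ hv hx'
      rw [haa, hbb, hcc, hab, hac, hbc] at h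
      exact ⟨p*α + q*β + r*γ, by linear_combination h⟩
    · intro i
      have h := cross_combo a b c v x p q r α β γ hv hx' i
      rw [hab' i, hbc' i, hca' i] at h
      exact ⟨ε * ((p*β - q*α) * c i + (q*γ - r*β) * a i + (r*α - p*γ) * b i),
        by linear_combination h⟩
  · -- expansion lemma (A)
    have hexp : ∀ (z : Fin 3 → ℤ) i,
        (d:ℤ)^2 * z i = dot3 z a * a i + dot3 z b * b i + dot3 z c * c i := by
      intro z i
      have h := cramer3 a b c z i
      have e0 : dot3 (cross3 a b) c = ε * d * ((d:ℤ)^2) := by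
        have hcc' := hcc
        simp only [dot3] at hcc' ⊢
        rw [hab' 0, hab' 1, hab' 2]
        linear_combination (ε * (d:ℤ)) * hcc'
      have e1 : dot3 z (cross3 b c) = ε * d * dot3 z a := by
        simp only [dot3]; rw [hbc' 0, hbc' 1, hbc' 2]; ring
      have e2 : dot3 z (cross3 c a) = ε * d * dot3 z b := by
        simp only [dot3]; rw [hca' 0, hca' 1, hca' 2]; ring
      have e3 : dot3 z (cross3 a b) = ε * d * dot3 z c := by
        simp only [dot3]; rw [hab' 0, hab' 1, hab' 2]; ring
      rw [e0, e1, e2, e3] at h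
      apply mul_left_cancel₀ (mul_ne_zero hεz hdz)
      linear_combination h
    intro σ w y x hx
    have hw2 : ∀ i, cross3 v (fun j => (d:ℤ)^2 * w j) i = (d:ℤ)^2 * cross3 v w i := by
      intro i; fin_cases i <;> simp [cross3] <;> ring
    have hcc2 := cross_combo a b c v (fun j => (d:ℤ)^2 * w j) p q r
      (dot3 w a) (dot3 w b) (dot3 w c) hv (fun i => hexp w i)
    have hdvw : ∀ i, (d:ℤ) * cross3 v w i =
        ε * ((q * dot3 w c - r * dot3 w b) * a i + (r * dot3 w a - p * dot3 w c) * b i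
          + (p * dot3 w b - q * dot3 w a) * c i) := by
      intro i
      apply mul_left_cancel₀ hdz
      have h := hcc2 i
      rw [hw2 i, hab' i, hbc' i, hca' i] at h
      linear_combination h
    refine (mem_closure_triple x).mpr
      ⟨σ*p + ε*(q * dot3 w c - r * dot3 w b) + dot3 y a,
       σ*q + ε*(r * dot3 w a - p * dot3 w c) + dot3 y b,
       σ*r + ε*(p * dot3 w b - q * dot3 w a) + dot3 y c, fun i => ?_⟩
    linear_combination (hx i) + σ * (hv i) + (hdvw i) + (hexp y i)

lemma decomp3 (v x : Fin 3 → ℤ) (d : ℕ) (hd : 0 < d) (hv : Primitive v)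
    (hn : (d:ℤ)^2 ∣ dot3 v v) (h1 : (d:ℤ)^2 ∣ dot3 v x)
    (h2 : ∀ i, (d:ℤ) ∣ cross3 v x i) :
    ∃ (σ : ℤ) (w y : Fin 3 → ℤ),
      ∀ i, x i = σ * v i + d * cross3 v w i + (d:ℤ)^2 * y i := by
  have hdz : (d:ℤ) ≠ 0 := Int.natCast_ne_zero.mpr hd.ne'
  -- Bezout coefficients
  obtain ⟨α, β, γ, hbez⟩ : ∃ α β γ : ℤ, α * v 0 + β * v 1 + γ * v 2 = 1 := by
    have hg : (Int.gcd (v 0) (v 1) : ℤ) =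
        v 0 * Int.gcdA (v 0) (v 1) + v 1 * Int.gcdB (v 0) (v 1) :=
      Int.gcd_eq_gcd_ab _ _
    have hg2 : ((Int.gcd ((Int.gcd (v 0) (v 1) : ℤ)) (v 2) : ℤ)) =
        (Int.gcd (v 0) (v 1) : ℤ) * Int.gcdA ((Int.gcd (v 0) (v 1) : ℤ)) (v 2)
          + v 2 * Int.gcdB ((Int.gcd (v 0) (v 1) : ℤ)) (v 2) :=
      Int.gcd_eq_gcd_ab _ _
    have h1' : ((Int.gcd ((Int.gcd (v 0) (v 1) : ℤ)) (v 2) : ℤ)) = 1 := by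
      rw [hv]; norm_num
    refine ⟨Int.gcdA (v 0) (v 1) * Int.gcdA ((Int.gcd (v 0) (v 1) : ℤ)) (v 2),
      Int.gcdB (v 0) (v 1) * Int.gcdA ((Int.gcd (v 0) (v 1) : ℤ)) (v 2),
      Int.gcdB ((Int.gcd (v 0) (v 1) : ℤ)) (v 2), ?_⟩
    rw [← h1', hg2, hg]; ring
  set σ := α * x 0 + β * x 1 + γ * x 2 with hσ
  obtain ⟨k0, hk0⟩ := h2 0
  obtain ⟨k1, hk1⟩ := h2 1
  obtain ⟨k2, hk2⟩ := h2 2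
  simp only [cross3, Matrix.cons_val_zero, Matrix.cons_val_one, Matrix.head_cons,
    Matrix.cons_val_two, Matrix.tail_cons] at hk0 hk1 hk2
  -- u := (x - σ v)/d
  have hu : ∀ i, ∃ t, x i - σ * v i = (d:ℤ) * t := by
    intro i
    fin_cases i
    · exact ⟨γ * k1 - β * k2, by
        show x 0 - σ * v 0 = _
        linear_combination (-(x 0)) * hbez + γ * hk1 - β * hk2⟩
    · exact ⟨α * k2 - γ * k0, by
        show x 1 - σ * v 1 = _
        linear_combination (-(x 1)) * hbez + α * hk2 - γ * hk0⟩
    · exact ⟨β * k0 - α * k1, by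
        show x 2 - σ * v 2 = _
        linear_combination (-(x 2)) * hbez + β * hk0 - α * hk1⟩
  choose u hu' using hu
  obtain ⟨s, hs⟩ := h1
  obtain ⟨m, hm⟩ := hn
  have he : dot3 v u = (d:ℤ) * (s - σ * m) := by
    apply mul_left_cancel₀ hdz
    have e0 := hu' 0; have e1 := hu' 1; have e2 := hu' 2
    simp only [dot3] at hs hm ⊢
    linear_combination (-(v 0)) * e0 + (-(v 1)) * e1 + (-(v 2)) * e2 + hs - σ * hm
  set e := s - σ * m with hedef
  have e0 := hu' 0; have e1 := hu' 1; have e2 := hu' 2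
  have he' : v 0 * u 0 + v 1 * u 1 + v 2 * u 2 = (d:ℤ) * e := by
    have := he; simp only [dot3] at this; exact this
  refine ⟨σ, ![γ * u 1 - β * u 2, α * u 2 - γ * u 0, β * u 0 - α * u 1],
    ![α * e, β * e, γ * e], fun i => ?_⟩
  fin_cases i
  · show x 0 = σ * v 0 + (d:ℤ) * cross3 v _ 0 + (d:ℤ)^2 * ![α * e, β * e, γ * e] 0
    simp only [cross3, Matrix.cons_val_zero, Matrix.cons_val_one, Matrix.head_cons,
      Matrix.cons_val_two, Matrix.tail_cons]
    linear_combination e0 + (d:ℤ) * α * he' - (d:ℤ) * (u 0) * hbez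
  · show x 1 = σ * v 1 + (d:ℤ) * cross3 v _ 1 + (d:ℤ)^2 * ![α * e, β * e, γ * e] 1
    simp only [cross3, Matrix.cons_val_zero, Matrix.cons_val_one, Matrix.head_cons,
      Matrix.cons_val_two, Matrix.tail_cons]
    linear_combination e1 + (d:ℤ) * β * he' - (d:ℤ) * (u 1) * hbez
  · show x 2 = σ * v 2 + (d:ℤ) * cross3 v _ 2 + (d:ℤ)^2 * ![α * e, β * e, γ * e] 2
    simp only [cross3, Matrix.cons_val_zero, Matrix.cons_val_one, Matrix.head_cons,
      Matrix.cons_val_two, Matrix.tail_cons]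
    linear_combination e2 + (d:ℤ) * γ * he' - (d:ℤ) * (u 2) * hbez

/-- Uniqueness part of the main theorem: for primitive `v` with `d² ∣ ‖v‖²`,
any two cubic sublattices of edge length `d` containing `v` coincide. -/
theorem cubic_sublattice_unique (v : Fin 3 → ℤ) (hv : Primitive v) (d : ℕ)
    (hd : 0 < d) (hdvd : (d : ℤ)^2 ∣ dot3 v v)
    (Γ₁ Γ₂ : AddSubgroup (Fin 3 → ℤ))
    (h₁ : IsCubicLattice Γ₁ d) (h₂ : IsCubicLattice Γ₂ d)
    (hv₁ : v ∈ Γ₁) (hv₂ : v ∈ Γ₂) :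
    Γ₁ = Γ₂ := by
  have main : ∀ Γ Γ' : AddSubgroup (Fin 3 → ℤ), IsCubicLattice Γ d → IsCubicLattice Γ' d →
      v ∈ Γ → v ∈ Γ' → Γ ≤ Γ' := by
    intro Γ Γ' hC hC' hvΓ hvΓ' x hx
    obtain ⟨a, b, c, hΓ, hab, hac, hbc, haa, hbb, hcc⟩ := hC
    obtain ⟨a', b', c', hΓ', hab', hac', hbc', haa', hbb', hcc'⟩ := hC'
    obtain ⟨hup, _⟩ := cubic_main d hd a b c v Γ hΓ hab hac hbc haa hbb hcc hvΓ
    obtain ⟨_, hlow⟩ := cubic_main d hd a' b' c' v Γ' hΓ' hab' hac' hbc' haa' hbb' hcc' hvΓ'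
    obtain ⟨hdot, hcross⟩ := hup x hx
    obtain ⟨σ, w, y, hxeq⟩ := decomp3 v x d hd hv hdvd hdot hcross
    exact hlow σ w y x hxeq
  exact le_antisymm (main Γ₁ Γ₂ h₁ h₂ hv₁ hv₂) (main Γ₂ Γ₁ h₂ h₁ hv₂ hv₁)
end

section
/- Let v ∈ ℤ³ be a nonzero vector with greatest divisor k (so v = k·u with u primitive), suppose d² ∣ ‖v‖² and gcd(k, d) = 1, and let Γ be a cubic sublattice of edge length d containing v. Then Γ also contains u = v/k. -/
open Matrix


/-- The "dual" orthogonality relations: if the rows of a matrix are orthogonal with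
common square norm `d²`, then so are the columns. -/
lemma col_orth (a b c : Fin 3 → ℤ) (d : ℕ) (hd : 0 < d)
    (hab : dot3 a b = 0) (hac : dot3 a c = 0) (hbc : dot3 b c = 0)
    (haa : dot3 a a = (d : ℤ)^2) (hbb : dot3 b b = (d : ℤ)^2)
    (hcc : dot3 c c = (d : ℤ)^2) :
    ∀ i j : Fin 3, a i * a j + b i * b j + c i * c j = if i = j then (d : ℤ)^2 else 0 := by
  simp only [dot3] at hab hac hbc haa hbb hcc
  have qab : (a 0 : ℚ) * b 0 + a 1 * b 1 + a 2 * b 2 = 0 := by exact_mod_cast hab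
  have qac : (a 0 : ℚ) * c 0 + a 1 * c 1 + a 2 * c 2 = 0 := by exact_mod_cast hac
  have qbc : (b 0 : ℚ) * c 0 + b 1 * c 1 + b 2 * c 2 = 0 := by exact_mod_cast hbc
  have qaa : (a 0 : ℚ) * a 0 + a 1 * a 1 + a 2 * a 2 = (d : ℚ)^2 := by exact_mod_cast haa
  have qbb : (b 0 : ℚ) * b 0 + b 1 * b 1 + b 2 * b 2 = (d : ℚ)^2 := by exact_mod_cast hbb
  have qcc : (c 0 : ℚ) * c 0 + c 1 * c 1 + c 2 * c 2 = (d : ℚ)^2 := by exact_mod_cast hcc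
  set M : Matrix (Fin 3) (Fin 3) ℚ := Matrix.of ![(fun j => (a j : ℚ)),
    (fun j => (b j : ℚ)), (fun j => (c j : ℚ))] with hM
  have hdQ : (d : ℚ) ≠ 0 := Nat.cast_ne_zero.mpr hd.ne'
  have h1 : M * Mᵀ = ((d : ℚ)^2) • 1 := by
    ext i j
    rw [Matrix.mul_apply]
    simp only [Matrix.transpose_apply, Fin.sum_univ_three]
    fin_cases i <;> fin_cases j <;>
      simp [hM, Matrix.one_apply] <;> linarith [qab, qac, qbc, qaa, qbb, qcc]
  have hone : (d : ℚ)⁻¹ * (d : ℚ)⁻¹ * (d : ℚ)^2 = 1 := by field_simp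
  have hN : ((d : ℚ)⁻¹ • M) * ((d : ℚ)⁻¹ • M)ᵀ = 1 := by
    rw [Matrix.transpose_smul, Matrix.smul_mul, Matrix.mul_smul, h1, smul_smul, smul_smul,
      hone, one_smul]
  have hN2 : ((d : ℚ)⁻¹ • M)ᵀ * ((d : ℚ)⁻¹ • M) = 1 := mul_eq_one_comm.mp hN
  rw [Matrix.transpose_smul, Matrix.smul_mul, Matrix.mul_smul, smul_smul] at hN2
  have h2 : Mᵀ * M = ((d : ℚ)^2) • 1 := by
    have h4 := congrArg (fun X : Matrix (Fin 3) (Fin 3) ℚ => ((d : ℚ)^2) • X) hN2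
    simp only [smul_smul] at h4
    rw [show (d : ℚ)^2 * ((d : ℚ)⁻¹ * (d : ℚ)⁻¹) = 1 by field_simp] at h4
    rw [one_smul] at h4
    rw [h4]
  intro i j
  have h5 := congrFun (congrFun h2 i) j
  rw [Matrix.mul_apply] at h5
  simp only [Matrix.transpose_apply, Fin.sum_univ_three, Matrix.smul_apply,
    Matrix.one_apply, smul_eq_mul] at h5
  have h3 : (a i : ℚ) * a j + b i * b j + c i * c j = if i = j then ((d : ℚ))^2 else 0 := by
    fin_cases i <;> fin_cases j <;> simpa [hM] using h5
  by_cases h : i = j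
  · rw [if_pos h]; rw [if_pos h] at h3; exact_mod_cast h3
  · rw [if_neg h]; rw [if_neg h] at h3; exact_mod_cast h3

/-- If `v = k • u` with `u` primitive, `d² ∣ ‖v‖²`, `gcd(k,d) = 1`, and `Γ` is a
cubic sublattice of edge length `d` containing `v`, then `u ∈ Γ` as well. -/
theorem primitive_part_mem (u v : Fin 3 → ℤ) (k : ℕ) (hk : 0 < k)
    (hu : Primitive u) (hv : v = (k : ℤ) • u)
    (d : ℕ) (hd : 0 < d) (hdvd : (d : ℤ)^2 ∣ dot3 v v)
    (hcop : Nat.gcd k d = 1)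
    (Γ : AddSubgroup (Fin 3 → ℤ)) (hΓ : IsCubicLattice Γ d) (hvΓ : v ∈ Γ) :
    u ∈ Γ := by
  obtain ⟨a, b, c, hΓeq, hab, hac, hbc, haa, hbb, hcc⟩ := hΓ
  have key := col_orth a b c d hd hab hac hbc haa hbb hcc
  -- d² • u = (dot3 a u) • a + (dot3 b u) • b + (dot3 c u) • c
  have hdu : ((d : ℤ)^2) • u = (dot3 a u) • a + (dot3 b u) • b + (dot3 c u) • c := by
    funext i
    have e0 := key i 0
    have e1 := key i 1
    have e2 := key i 2
    fin_cases i <;>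
      · simp only [Fin.isValue, if_true, if_false, Fin.zero_eta, Fin.mk_one,
          show (⟨2, by norm_num⟩ : Fin 3) = 2 from rfl] at e0 e1 e2
        simp only [Pi.add_apply, Pi.smul_apply, smul_eq_mul, dot3]
        simp at e0 e1 e2 ⊢
        linear_combination (-(u 0)) * e0 + (-(u 1)) * e1 + (-(u 2)) * e2
  have haΓ : a ∈ Γ := by
    rw [hΓeq]; exact AddSubgroup.subset_closure (by simp)
  have hbΓ : b ∈ Γ := by
    rw [hΓeq]; exact AddSubgroup.subset_closure (by simp)
  have hcΓ : c ∈ Γ := by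
    rw [hΓeq]; exact AddSubgroup.subset_closure (by simp)
  have hd2u : ((d : ℤ)^2) • u ∈ Γ := by
    rw [hdu]
    exact add_mem (add_mem (AddSubgroup.zsmul_mem Γ haΓ _) (AddSubgroup.zsmul_mem Γ hbΓ _))
      (AddSubgroup.zsmul_mem Γ hcΓ _)
  have hku : (k : ℤ) • u ∈ Γ := hv ▸ hvΓ
  -- Bezout
  have hcop2 : IsCoprime (k : ℤ) ((d : ℤ)^2) := by
    rw [Int.isCoprime_iff_gcd_eq_one]
    have : Nat.Coprime k (d^2) := (Nat.coprime_iff_gcd_eq_one.mpr hcop).pow_right 2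
    simpa [Int.gcd, Int.natAbs_pow] using this
  obtain ⟨s, t, hst⟩ := hcop2
  have : u = s • ((k : ℤ) • u) + t • (((d : ℤ)^2) • u) := by
    funext i
    simp only [Pi.add_apply, Pi.smul_apply, smul_eq_mul]
    linear_combination (-(u i)) * hst
  rw [this]
  exact add_mem (AddSubgroup.zsmul_mem Γ hku s) (AddSubgroup.zsmul_mem Γ hd2u t)
end

section
/- If an integer of the form d²·m (with d, m positive integers) is a sum of three squares of integers, then m is also a sum of three squares of integers. -/
/-- Rounding: for `N > 0` and any `x`, there is `y` with `4*(x - N*y)^2 ≤ N^2`. -/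
private lemma round_lemma (N x : ℤ) (hN : 0 < N) :
    ∃ y : ℤ, 4 * (x - N * y)^2 ≤ N^2 := by
  rcases le_or_gt (2 * (x % N)) N with hle | hlt
  · refine ⟨x / N, ?_⟩
    have h0 : 0 ≤ x % N := Int.emod_nonneg x hN.ne'
    have hx : x - N * (x / N) = x % N := by rw [Int.emod_def]
    rw [hx]
    nlinarith
  · refine ⟨x / N + 1, ?_⟩
    have h1 : x % N < N := Int.emod_lt_of_pos x hN
    have hx : x - N * (x / N + 1) = x % N - N := by rw [Int.emod_def]; ring
    rw [hx]
    nlinarith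

private lemma descent_aux (m : ℤ) : ∀ n : ℕ, 0 < n → ∀ x1 x2 x3 : ℤ,
    (n : ℤ)^2 * m = x1^2 + x2^2 + x3^2 → ∃ a b c : ℤ, m = a^2 + b^2 + c^2 := by
  intro n
  induction n using Nat.strong_induction_on with
  | _ n ih =>
  intro hn x1 x2 x3 h
  set N : ℤ := (n : ℤ) with hNdef
  clear_value N
  have hN : 0 < N := by rw [hNdef]; exact_mod_cast hn
  obtain ⟨y1, hy1⟩ := round_lemma N x1 hN
  obtain ⟨y2, hy2⟩ := round_lemma N x2 hN
  obtain ⟨y3, hy3⟩ := round_lemma N x3 hN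
  set r : ℤ := (x1 - N*y1)^2 + (x2 - N*y2)^2 + (x3 - N*y3)^2 with hr
  clear_value r
  have hr0 : 0 ≤ r := by rw [hr]; positivity
  have hrlt : r < N^2 := by nlinarith [hr, hy1, hy2, hy3, hN]
  rcases eq_or_lt_of_le hr0 with hzero | hpos
  · -- r = 0 : x = N y, so m = q(y)
    have h1 : x1 - N*y1 = 0 := by nlinarith [hr, hzero, sq_nonneg (x1 - N*y1), sq_nonneg (x2 - N*y2), sq_nonneg (x3 - N*y3)]
    have h2 : x2 - N*y2 = 0 := by nlinarith [hr, hzero, sq_nonneg (x1 - N*y1), sq_nonneg (x2 - N*y2), sq_nonneg (x3 - N*y3)]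
    have h3 : x3 - N*y3 = 0 := by nlinarith [hr, hzero, sq_nonneg (x1 - N*y1), sq_nonneg (x2 - N*y2), sq_nonneg (x3 - N*y3)]
    refine ⟨y1, y2, y3, ?_⟩
    have hx1 : x1 = N*y1 := by linarith
    have hx2 : x2 = N*y2 := by linarith
    have hx3 : x3 = N*y3 := by linarith
    have : N^2 * m = N^2 * (y1^2 + y2^2 + y3^2) := by
      rw [h, hx1, hx2, hx3]; ring
    exact mul_left_cancel₀ (pow_ne_zero 2 hN.ne') this
  · -- descent step
    set s : ℤ := x1*y1 + x2*y2 + x3*y3 with hs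
    set a : ℤ := y1^2 + y2^2 + y3^2 - m with ha
    set b : ℤ := 2 * (N*m - s) with hb
    set n' : ℤ := a*N + b with hn'
    clear_value s a b n'
    have key1 : N * n' = r := by
      rw [hn', ha, hb, hr, hs]
      linear_combination h
    have key2 : n'^2 * m = (a*x1 + b*y1)^2 + (a*x2 + b*y2)^2 + (a*x3 + b*y3)^2 := by
      rw [hn', ha, hb, hs]
      linear_combination (y1^2 + y2^2 + y3^2 - m)^2 * h
    have hmul : 0 < N * n' := by rw [key1]; exact hpos
    have hn'pos : 0 < n' := by
      rcases mul_pos_iff.mp hmul with ⟨_, h'⟩ | ⟨h', _⟩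
      · exact h'
      · exact absurd hN (not_lt.mpr h'.le)
    have hn'lt : n' < N := by
      have h' : N * n' < N * N := by rw [key1, ← pow_two]; exact hrlt
      exact lt_of_mul_lt_mul_left h' hN.le
    have hkpos : 0 < n'.toNat := by omega
    have hklt : n'.toNat < n := by
      have : (n'.toNat : ℤ) < (n : ℤ) := by
        rw [Int.toNat_of_nonneg hn'pos.le, ← hNdef]; exact hn'lt
      exact_mod_cast this
    refine ih n'.toNat hklt hkpos (a*x1 + b*y1) (a*x2 + b*y2) (a*x3 + b*y3) ?_
    rw [Int.toNat_of_nonneg hn'pos.le]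
    exact key2

/-- If `d²·m` is a sum of three squares, then so is `m`. -/
theorem sum_three_squares_descent (d m : ℕ) (hd : 0 < d) (hm : 0 < m)
    (x y z : ℤ) (h : (d : ℤ)^2 * m = x^2 + y^2 + z^2) :
    ∃ a b c : ℤ, (m : ℤ) = a^2 + b^2 + c^2 := by
  exact descent_aux (m : ℤ) d hd x y z h
end

section
/- If an integer d²·m (with d, m positive integers) can be written as x² + y² + z² with gcd(x, y, z) = 1, then m can be written as a² + b² + c² with gcd(a, b, c) = 1. -/
open Quaternion

/-- A rational is an integer. -/
def IsInt (r : ℚ) : Prop := ∃ n : ℤ, r = n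

lemma IsInt.add {r s : ℚ} (hr : IsInt r) (hs : IsInt s) : IsInt (r + s) := by
  obtain ⟨a, rfl⟩ := hr; obtain ⟨b, rfl⟩ := hs; exact ⟨a + b, by push_cast; ring⟩

lemma IsInt.mul {r s : ℚ} (hr : IsInt r) (hs : IsInt s) : IsInt (r * s) := by
  obtain ⟨a, rfl⟩ := hr; obtain ⟨b, rfl⟩ := hs; exact ⟨a * b, by push_cast; ring⟩

lemma IsInt.neg {r : ℚ} (hr : IsInt r) : IsInt (-r) := by
  obtain ⟨a, rfl⟩ := hr; exact ⟨-a, by push_cast; ring⟩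

lemma IsInt.sub {r s : ℚ} (hr : IsInt r) (hs : IsInt s) : IsInt (r - s) := by
  obtain ⟨a, rfl⟩ := hr; obtain ⟨b, rfl⟩ := hs; exact ⟨a - b, by push_cast; ring⟩

lemma isInt_intCast (n : ℤ) : IsInt (n : ℚ) := ⟨n, rfl⟩
lemma isInt_zero : IsInt (0 : ℚ) := ⟨0, by norm_num⟩
lemma isInt_one : IsInt (1 : ℚ) := ⟨1, by norm_num⟩

/-- Lipschitz (integral) quaternion. -/
def IsLip (x : Quaternion ℚ) : Prop := IsInt x.re ∧ IsInt x.imI ∧ IsInt x.imJ ∧ IsInt x.imK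

lemma IsLip.add {x y : Quaternion ℚ} (hx : IsLip x) (hy : IsLip y) : IsLip (x + y) := by
  obtain ⟨h1, h2, h3, h4⟩ := hx; obtain ⟨g1, g2, g3, g4⟩ := hy
  exact ⟨by simpa using h1.add g1, by simpa using h2.add g2, by simpa using h3.add g3,
    by simpa using h4.add g4⟩

lemma IsLip.neg {x : Quaternion ℚ} (hx : IsLip x) : IsLip (-x) := by
  obtain ⟨h1, h2, h3, h4⟩ := hx
  exact ⟨by simpa using h1.neg, by simpa using h2.neg, by simpa using h3.neg,
    by simpa using h4.neg⟩

lemma IsLip.sub {x y : Quaternion ℚ} (hx : IsLip x) (hy : IsLip y) : IsLip (x - y) := by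
  rw [sub_eq_add_neg]; exact hx.add hy.neg

lemma IsLip.mul {x y : Quaternion ℚ} (hx : IsLip x) (hy : IsLip y) : IsLip (x * y) := by
  obtain ⟨h1, h2, h3, h4⟩ := hx; obtain ⟨g1, g2, g3, g4⟩ := hy
  refine ⟨?_, ?_, ?_, ?_⟩
  · rw [Quaternion.re_mul]; exact ((h1.mul g1).sub (h2.mul g2)).sub (h3.mul g3) |>.sub (h4.mul g4)
  · rw [Quaternion.imI_mul]; exact (((h1.mul g2).add (h2.mul g1)).add (h3.mul g4)).sub (h4.mul g3)
  · rw [Quaternion.imJ_mul]; exact (((h1.mul g3).sub (h2.mul g4)).add (h3.mul g1)).add (h4.mul g2)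
  · rw [Quaternion.imK_mul]; exact (((h1.mul g4).add (h2.mul g3)).sub (h3.mul g2)).add (h4.mul g1)

lemma IsLip.star {x : Quaternion ℚ} (hx : IsLip x) : IsLip (star x) := by
  obtain ⟨h1, h2, h3, h4⟩ := hx
  exact ⟨by simpa using h1, by simpa using h2.neg, by simpa using h3.neg, by simpa using h4.neg⟩

lemma isLip_intCast (n : ℤ) : IsLip ((n : ℤ) : Quaternion ℚ) := by
  refine ⟨?_, ?_, ?_, ?_⟩ <;>
    simp [Quaternion.re_coe, Quaternion.imI_coe, Quaternion.imJ_coe, Quaternion.imK_coe,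
      isInt_intCast, isInt_zero]

lemma isLip_zero : IsLip (0 : Quaternion ℚ) := by simpa using isLip_intCast 0

def mkq (a b c d : ℚ) : Quaternion ℚ := ⟨a, b, c, d⟩
@[simp] lemma mkq_re (a b c d : ℚ) : (mkq a b c d).re = a := rfl
@[simp] lemma mkq_imI (a b c d : ℚ) : (mkq a b c d).imI = b := rfl
@[simp] lemma mkq_imJ (a b c d : ℚ) : (mkq a b c d).imJ = c := rfl
@[simp] lemma mkq_imK (a b c d : ℚ) : (mkq a b c d).imK = d := rfl

lemma mkq_eta (x : Quaternion ℚ) : mkq x.re x.imI x.imJ x.imK = x := rfl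

lemma isLip_mkq (a b c d : ℤ) : IsLip (mkq (a:ℚ) b c d) :=
  ⟨⟨a, rfl⟩, ⟨b, rfl⟩, ⟨c, rfl⟩, ⟨d, rfl⟩⟩

lemma IsLip.eq_mkq {x : Quaternion ℚ} (hx : IsLip x) :
    ∃ a b c d : ℤ, x = mkq (a:ℚ) b c d := by
  obtain ⟨⟨a, ha⟩, ⟨b, hb⟩, ⟨c, hc⟩, ⟨d, hd⟩⟩ := hx
  exact ⟨a, b, c, d, by rw [← mkq_eta x, ha, hb, hc, hd]⟩

def ω : Quaternion ℚ := mkq (1/2) (1/2) (1/2) (1/2)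
def tq : Quaternion ℚ := mkq 1 1 1 1

/-- Hurwitz quaternion. -/
def IsHur (x : Quaternion ℚ) : Prop := IsLip x ∨ IsLip (x - ω)

lemma IsLip.isHur {x : Quaternion ℚ} (hx : IsLip x) : IsHur x := Or.inl hx

lemma isLip_two_omega : IsLip (ω + ω) := by
  have : ω + ω = mkq ((1:ℤ):ℚ) 1 1 1 := by ext <;> simp [ω] <;> norm_num
  rw [this]; exact isLip_mkq 1 1 1 1

lemma IsHur.add {x y : Quaternion ℚ} (hx : IsHur x) (hy : IsHur y) : IsHur (x + y) := by
  rcases hx with hx | hx <;> rcases hy with hy | hy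
  · exact Or.inl (hx.add hy)
  · exact Or.inr (by have : x + y - ω = x + (y - ω) := by abel
                     rw [this]; exact hx.add hy)
  · exact Or.inr (by have : x + y - ω = (x - ω) + y := by abel
                     rw [this]; exact hx.add hy)
  · exact Or.inl (by have : x + y = (x - ω) + (y - ω) + (ω + ω) := by abel
                     rw [this]; exact (hx.add hy).add isLip_two_omega)

lemma IsHur.neg {x : Quaternion ℚ} (hx : IsHur x) : IsHur (-x) := by
  rcases hx with hx | hx
  · exact Or.inl hx.neg
  · refine Or.inr ?_
    have : -x - ω = -(x - ω) - (ω + ω) := by abel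
    rw [this]; exact hx.neg.sub isLip_two_omega

lemma IsHur.sub {x y : Quaternion ℚ} (hx : IsHur x) (hy : IsHur y) : IsHur (x - y) := by
  have : x - y = x + (-y) := by abel
  rw [this]; exact hx.add hy.neg

lemma omega_eq_smul : ω = (2:ℚ)⁻¹ • tq := by ext <;> simp [ω, tq] <;> norm_num

lemma isHur_half_smul (e1 e2 e3 e4 : ℤ)
    (h12 : e1 % 2 = e2 % 2) (h13 : e1 % 2 = e3 % 2) (h14 : e1 % 2 = e4 % 2) :
    IsHur ((2:ℚ)⁻¹ • mkq (e1:ℚ) e2 e3 e4) := by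
  rcases Int.even_or_odd e1 with he | he
  · obtain ⟨f1, hf1⟩ := he
    obtain ⟨f2, hf2⟩ : Even e2 := by rw [Int.even_iff] at *; omega
    obtain ⟨f3, hf3⟩ : Even e3 := by rw [Int.even_iff] at *; omega
    obtain ⟨f4, hf4⟩ : Even e4 := by rw [Int.even_iff] at *; omega
    refine Or.inl ⟨⟨f1, ?_⟩, ⟨f2, ?_⟩, ⟨f3, ?_⟩, ⟨f4, ?_⟩⟩ <;>
      simp [hf1, hf2, hf3, hf4] <;> push_cast <;> ring
  · obtain ⟨f1, hf1⟩ := he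
    obtain ⟨f2, hf2⟩ : Odd e2 := by rw [Int.odd_iff] at *; omega
    obtain ⟨f3, hf3⟩ : Odd e3 := by rw [Int.odd_iff] at *; omega
    obtain ⟨f4, hf4⟩ : Odd e4 := by rw [Int.odd_iff] at *; omega
    refine Or.inr ⟨⟨f1, ?_⟩, ⟨f2, ?_⟩, ⟨f3, ?_⟩, ⟨f4, ?_⟩⟩ <;>
      simp [ω, hf1, hf2, hf3, hf4] <;> push_cast <;> ring

lemma mkq_mul_tq (a b c d : ℚ) :
    (mkq a b c d) * tq = mkq (a-b-c-d) (a+b+c-d) (a-b+c+d) (a+b-c+d) := by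
  ext <;> simp [tq, Quaternion.re_mul, Quaternion.imI_mul, Quaternion.imJ_mul,
    Quaternion.imK_mul] <;> ring

lemma tq_mul_mkq (a b c d : ℚ) :
    tq * (mkq a b c d) = mkq (a-b-c-d) (a+b-c+d) (a+b+c-d) (a-b+c+d) := by
  ext <;> simp [tq, Quaternion.re_mul, Quaternion.imI_mul, Quaternion.imJ_mul,
    Quaternion.imK_mul] <;> ring

lemma isHur_lip_mul_omega {x : Quaternion ℚ} (hx : IsLip x) : IsHur (x * ω) := by
  obtain ⟨a, b, c, d, rfl⟩ := hx.eq_mkq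
  rw [omega_eq_smul, mul_smul_comm, mkq_mul_tq]
  have : mkq ((a:ℚ)-b-c-d) ((a:ℚ)+b+c-d) ((a:ℚ)-b+c+d) ((a:ℚ)+b-c+d)
      = mkq ((a-b-c-d : ℤ):ℚ) ((a+b+c-d : ℤ):ℚ) ((a-b+c+d : ℤ):ℚ) ((a+b-c+d : ℤ):ℚ) := by
    push_cast; rfl
  rw [this]
  exact isHur_half_smul _ _ _ _ (by omega) (by omega) (by omega)

lemma isHur_omega_mul_lip {x : Quaternion ℚ} (hx : IsLip x) : IsHur (ω * x) := by
  obtain ⟨a, b, c, d, rfl⟩ := hx.eq_mkq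
  rw [omega_eq_smul, smul_mul_assoc, tq_mul_mkq]
  have : mkq ((a:ℚ)-b-c-d) ((a:ℚ)+b-c+d) ((a:ℚ)+b+c-d) ((a:ℚ)-b+c+d)
      = mkq ((a-b-c-d : ℤ):ℚ) ((a+b-c+d : ℤ):ℚ) ((a+b+c-d : ℤ):ℚ) ((a-b+c+d : ℤ):ℚ) := by
    push_cast; rfl
  rw [this]
  exact isHur_half_smul _ _ _ _ (by omega) (by omega) (by omega)

lemma omega_mul_omega : ω * ω = ω - 1 := by
  ext <;> simp [ω, Quaternion.re_mul, Quaternion.imI_mul, Quaternion.imJ_mul,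
    Quaternion.imK_mul] <;> norm_num

lemma isLip_one : IsLip (1 : Quaternion ℚ) := by simpa using isLip_intCast 1

lemma IsHur.mul {x y : Quaternion ℚ} (hx : IsHur x) (hy : IsHur y) : IsHur (x * y) := by
  rcases hx with hx | hx <;> rcases hy with hy | hy
  · exact (hx.mul hy).isHur
  · have : x * y = x * (y - ω) + x * ω := by noncomm_ring
    rw [this]; exact (hx.mul hy).isHur.add (isHur_lip_mul_omega hx)
  · have : x * y = (x - ω) * y + ω * y := by noncomm_ring
    rw [this]; exact (hx.mul hy).isHur.add (isHur_omega_mul_lip hy)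
  · have : x * y = (x - ω) * (y - ω) + (x - ω) * ω + ω * (y - ω) + (ω * ω) := by noncomm_ring
    rw [this, omega_mul_omega]
    have homs : IsHur (ω - 1) := Or.inr (by
      have : ω - 1 - ω = -1 := by abel
      rw [this]; exact isLip_one.neg)
    exact (((hx.mul hy).isHur.add (isHur_lip_mul_omega hx)).add
      (isHur_omega_mul_lip hy)).add homs

lemma isLip_one_sub_two_omega : IsLip (1 - (ω + ω)) := isLip_one.sub isLip_two_omega

lemma star_omega : star ω = 1 - ω := by
  ext <;> simp [ω, Quaternion.re_star, Quaternion.imI_star, Quaternion.imJ_star,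
    Quaternion.imK_star] <;> norm_num

lemma IsHur.star {x : Quaternion ℚ} (hx : IsHur x) : IsHur (Star.star x) := by
  rcases hx with hx | hx
  · exact hx.star.isHur
  · refine Or.inr ?_
    have : Star.star x - ω = Star.star (x - ω) + (1 - (ω + ω)) := by
      rw [star_sub, star_omega]; abel
    rw [this]; exact hx.star.add isLip_one_sub_two_omega

lemma int_ne_neg_half (k : ℤ) : (k : ℚ) ≠ -(1/2) := by
  intro h
  have h2 : ((2 * k : ℤ) : ℚ) = -1 := by push_cast; linarith
  have : (2 * k : ℤ) = -1 := by exact_mod_cast h2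
  omega

lemma sub_omega_re (x : Quaternion ℚ) : (x - ω).re = x.re - 1/2 := by simp [ω]
lemma sub_omega_imI (x : Quaternion ℚ) : (x - ω).imI = x.imI - 1/2 := by simp [ω]
lemma sub_omega_imJ (x : Quaternion ℚ) : (x - ω).imJ = x.imJ - 1/2 := by simp [ω]
lemma sub_omega_imK (x : Quaternion ℚ) : (x - ω).imK = x.imK - 1/2 := by simp [ω]

lemma IsHur.isLip_of_re_zero {x : Quaternion ℚ} (hx : IsHur x) (h : x.re = 0) : IsLip x := by
  rcases hx with hx | hx
  · exact hx
  · exfalso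
    obtain ⟨k, hk⟩ := hx.1
    rw [sub_omega_re, h] at hk
    exact int_ne_neg_half k (by linarith)

lemma IsHur.normSq_int {x : Quaternion ℚ} (hx : IsHur x) : ∃ n : ℤ, normSq x = (n : ℚ) := by
  rcases hx with hx | hx
  · obtain ⟨a, b, c, d, rfl⟩ := hx.eq_mkq
    exact ⟨a^2 + b^2 + c^2 + d^2, by rw [normSq_def']; push_cast; simp [mkq]⟩
  · obtain ⟨a, ha⟩ := hx.1; obtain ⟨b, hb⟩ := hx.2.1
    obtain ⟨c, hc⟩ := hx.2.2.1; obtain ⟨d, hd⟩ := hx.2.2.2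
    rw [sub_omega_re] at ha; rw [sub_omega_imI] at hb
    rw [sub_omega_imJ] at hc; rw [sub_omega_imK] at hd
    refine ⟨a^2 + b^2 + c^2 + d^2 + a + b + c + d + 1, ?_⟩
    rw [normSq_def']
    have h1 : x.re = (a : ℚ) + 1/2 := by linarith
    have h2 : x.imI = (b : ℚ) + 1/2 := by linarith
    have h3 : x.imJ = (c : ℚ) + 1/2 := by linarith
    have h4 : x.imK = (d : ℚ) + 1/2 := by linarith
    rw [h1, h2, h3, h4]; push_cast; ring

lemma IsHur.normSq_nat {x : Quaternion ℚ} (hx : IsHur x) : ∃ n : ℕ, normSq x = (n : ℚ) := by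
  obtain ⟨n, hn⟩ := hx.normSq_int
  have h0 : (0 : ℚ) ≤ (n : ℚ) := hn ▸ normSq_nonneg
  have : (0 : ℤ) ≤ n := by exact_mod_cast h0
  refine ⟨n.toNat, ?_⟩
  rw [hn]
  exact_mod_cast congrArg (fun m : ℤ => (m : ℚ)) (Int.toNat_of_nonneg this).symm

lemma IsHur.two_re_int {x : Quaternion ℚ} (hx : IsHur x) : ∃ n : ℤ, 2 * x.re = (n : ℚ) := by
  rcases hx with hx | hx
  · obtain ⟨a, ha⟩ := hx.1; exact ⟨2 * a, by rw [ha]; push_cast; ring⟩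
  · obtain ⟨a, ha⟩ := hx.1
    rw [sub_omega_re] at ha
    exact ⟨2 * a + 1, by push_cast; linarith⟩

lemma exists_round (r : ℚ) : ∃ n : ℤ, (r - (n:ℚ))^2 < 1/4 ∨ r - (n:ℚ) = 1/2 := by
  have h := abs_sub_round r
  have hsq : (r - round r)^2 ≤ 1/4 := by
    have := sq_abs (r - round r)
    nlinarith [abs_nonneg (r - round r)]
  rcases lt_or_eq_of_le hsq with h' | h'
  · exact ⟨round r, Or.inl h'⟩
  · have h2 : (r - round r - 1/2) * (r - round r + 1/2) = 0 := by nlinarith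
    rcases mul_eq_zero.1 h2 with h3 | h3
    · exact ⟨round r, Or.inr (by linarith)⟩
    · exact ⟨round r - 1, Or.inr (by push_cast; linarith)⟩

lemma exists_hur_close (x : Quaternion ℚ) : ∃ h, IsHur h ∧ normSq (x - h) < 1 := by
  obtain ⟨n1, o1⟩ := exists_round x.re
  obtain ⟨n2, o2⟩ := exists_round x.imI
  obtain ⟨n3, o3⟩ := exists_round x.imJ
  obtain ⟨n4, o4⟩ := exists_round x.imK
  by_cases hC : x.re - (n1:ℚ) = 1/2 ∧ x.imI - (n2:ℚ) = 1/2 ∧ x.imJ - (n3:ℚ) = 1/2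
      ∧ x.imK - (n4:ℚ) = 1/2
  · refine ⟨x, Or.inr ⟨⟨n1, ?_⟩, ⟨n2, ?_⟩, ⟨n3, ?_⟩, ⟨n4, ?_⟩⟩, by simp⟩
    · rw [sub_omega_re]; linarith [hC.1]
    · rw [sub_omega_imI]; linarith [hC.2.1]
    · rw [sub_omega_imJ]; linarith [hC.2.2.1]
    · rw [sub_omega_imK]; linarith [hC.2.2.2]
  · refine ⟨mkq (n1:ℚ) n2 n3 n4, (isLip_mkq _ _ _ _).isHur, ?_⟩
    rw [normSq_def']
    simp only [Quaternion.re_sub, Quaternion.imI_sub, Quaternion.imJ_sub, Quaternion.imK_sub,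
      mkq_re, mkq_imI, mkq_imJ, mkq_imK]
    have q1 : (x.re - (n1:ℚ))^2 < 1/4 ∨ ((x.re - (n1:ℚ))^2 = 1/4 ∧ x.re - (n1:ℚ) = 1/2) := by
      rcases o1 with h | h
      · exact Or.inl h
      · exact Or.inr ⟨by rw [h]; norm_num, h⟩
    have q2 : (x.imI - (n2:ℚ))^2 < 1/4 ∨ ((x.imI - (n2:ℚ))^2 = 1/4 ∧ x.imI - (n2:ℚ) = 1/2) := by
      rcases o2 with h | h
      · exact Or.inl h
      · exact Or.inr ⟨by rw [h]; norm_num, h⟩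
    have q3 : (x.imJ - (n3:ℚ))^2 < 1/4 ∨ ((x.imJ - (n3:ℚ))^2 = 1/4 ∧ x.imJ - (n3:ℚ) = 1/2) := by
      rcases o3 with h | h
      · exact Or.inl h
      · exact Or.inr ⟨by rw [h]; norm_num, h⟩
    have q4 : (x.imK - (n4:ℚ))^2 < 1/4 ∨ ((x.imK - (n4:ℚ))^2 = 1/4 ∧ x.imK - (n4:ℚ) = 1/2) := by
      rcases o4 with h | h
      · exact Or.inl h
      · exact Or.inr ⟨by rw [h]; norm_num, h⟩
    rcases q1 with h1 | ⟨h1, h1'⟩ <;> rcases q2 with h2 | ⟨h2, h2'⟩ <;>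
      rcases q3 with h3 | ⟨h3, h3'⟩ <;> rcases q4 with h4 | ⟨h4, h4'⟩ <;>
      first
      | linarith
      | exact absurd ⟨by linarith, by linarith, by linarith, by linarith⟩ hC

lemma isLip_ratIntCast (k : ℤ) : IsLip (((k : ℚ) : Quaternion ℚ)) := by
  refine ⟨⟨k, ?_⟩, ⟨0, ?_⟩, ⟨0, ?_⟩, ⟨0, ?_⟩⟩ <;> simp

lemma isHur_intCast_smul {Q : Quaternion ℚ} (k : ℤ) (hQ : IsHur Q) : IsHur ((k:ℚ) • Q) := by
  rw [← Quaternion.coe_mul_eq_smul]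
  exact (isLip_ratIntCast k).isHur.mul hQ

lemma hur_div (a q : Quaternion ℚ) (hq : q ≠ 0) :
    ∃ h, IsHur h ∧ normSq (a - h * q) < normSq q := by
  obtain ⟨h, hh, hlt⟩ := exists_hur_close (a * q⁻¹)
  refine ⟨h, hh, ?_⟩
  have hq' : 0 < normSq q := lt_of_le_of_ne normSq_nonneg (Ne.symm (normSq_ne_zero.2 hq))
  have key : a - h * q = (a * q⁻¹ - h) * q := by
    rw [sub_mul, mul_assoc, inv_mul_cancel₀ hq, mul_one]
  rw [key, map_mul]
  calc normSq (a * q⁻¹ - h) * normSq q < 1 * normSq q := mul_lt_mul_of_pos_right hlt hq'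
  _ = normSq q := one_mul _

set_option maxHeartbeats 2000000 in
lemma descent_step (p : ℕ) (hp : p.Prime) (hp2 : p ≠ 2) (n : ℕ) (x y z : ℤ)
    (h : (p:ℤ)^2 * n = x^2 + y^2 + z^2) (hcop : Int.gcd (Int.gcd x y) z = 1) :
    ∃ a b c : ℤ, (n:ℤ) = a^2 + b^2 + c^2 ∧ Int.gcd (Int.gcd a b) c = 1 := by
  classical
  have hppos : (0:ℚ) < p := by exact_mod_cast hp.pos
  have hpne : (p:ℚ) ≠ 0 := ne_of_gt hppos
  set v : Quaternion ℚ := mkq 0 (x:ℚ) (y:ℚ) (z:ℚ) with hvdef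
  set pQ : Quaternion ℚ := (p:ℚ) • (1 : Quaternion ℚ) with hpQdef
  have hvlip : IsLip v := ⟨⟨0, by simp [hvdef]⟩, ⟨x, rfl⟩, ⟨y, rfl⟩, ⟨z, rfl⟩⟩
  have hvre : v.re = 0 := rfl
  have hvstar : star v = -v := by
    ext <;> simp [hvdef]
  have hQcast : ((p:ℚ))^2 * (n:ℚ) = (x:ℚ)^2 + (y:ℚ)^2 + (z:ℚ)^2 := by exact_mod_cast h
  have hnormv : normSq v = (p:ℚ)^2 * (n:ℚ) := by
    rw [normSq_def']; simp [hvdef, mkq]; linarith [hQcast]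
  have hvv : v * v = -(((p:ℚ)^2 * (n:ℚ)) • (1 : Quaternion ℚ)) := by
    ext <;>
      simp [hvdef, Quaternion.re_mul, Quaternion.imI_mul, Quaternion.imJ_mul,
        Quaternion.imK_mul] <;>
      linarith [hQcast]
  have hpQmul : ∀ a : Quaternion ℚ, pQ * a = (p:ℚ) • a := by
    intro a; rw [hpQdef, smul_mul_assoc, one_mul]
  have hmulpQ : ∀ a : Quaternion ℚ, a * pQ = (p:ℚ) • a := by
    intro a; rw [hpQdef, mul_smul_comm, mul_one]
  have hnormpQ : normSq pQ = (p:ℚ)^2 := by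
    rw [hpQdef, normSq_smul]; simp
  have hplip : IsLip pQ := by
    refine ⟨⟨(p:ℤ), ?_⟩, ⟨0, ?_⟩, ⟨0, ?_⟩, ⟨0, ?_⟩⟩ <;> simp [hpQdef]
  clear_value v pQ
  -- membership in the left ideal J = H·p + H·v
  let InJ : Quaternion ℚ → Prop := fun w => ∃ α β, IsHur α ∧ IsHur β ∧ w = α * pQ + β * v
  have hInJ_hur : ∀ w, InJ w → IsHur w := by
    rintro w ⟨α, β, hα, hβ, rfl⟩
    exact (hα.mul hplip.isHur).add (hβ.mul hvlip.isHur)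
  have hInJ_normdvd : ∀ w, InJ w → ∃ k : ℤ, normSq w = (p:ℚ) * (k:ℚ) := by
    rintro w ⟨α, β, hα, hβ, rfl⟩
    obtain ⟨A, hA⟩ := hα.normSq_int
    obtain ⟨B, hB⟩ := hβ.normSq_int
    have hhur : IsHur (α * (star v * star β)) :=
      hα.mul ((hvstar ▸ hvlip.neg.isHur).mul hβ.star)
    obtain ⟨C, hC⟩ := hhur.two_re_int
    refine ⟨p * A + p * (n:ℤ) * B + C, ?_⟩
    have e1 : normSq (α * pQ) = normSq α * ((p:ℚ)^2) := by
      rw [map_mul, hnormpQ]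
    have e2 : normSq (β * v) = normSq β * ((p:ℚ)^2 * n) := by rw [map_mul, hnormv]
    have e3 : (α * pQ * star (β * v)).re = (p:ℚ) * (α * (star v * star β)).re := by
      rw [star_mul, show α * pQ * (star v * star β)
          = ((p:ℚ) • α) * (star v * star β) by rw [← hmulpQ α],
        smul_mul_assoc, Quaternion.re_smul, smul_eq_mul]
    rw [normSq_add, e1, e2, e3, hA, hB]
    push_cast
    nlinarith [hC]
  -- the set of norms of nonzero elements of J
  set S : Set ℕ := {k : ℕ | ∃ w, InJ w ∧ w ≠ 0 ∧ normSq w = (k:ℚ)} with hSdef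
  have hvinJ : InJ v := ⟨0, 1, isLip_zero.isHur, isLip_one.isHur, by simp⟩
  have hvne : v ≠ 0 := by
    intro h0
    have hx : (x:ℚ) = 0 := by
      have := congrArg QuaternionAlgebra.imI h0; simpa [hvdef, mkq] using this
    have hy : (y:ℚ) = 0 := by
      have := congrArg QuaternionAlgebra.imJ h0; simpa [hvdef, mkq] using this
    have hz : (z:ℚ) = 0 := by
      have := congrArg QuaternionAlgebra.imK h0; simpa [hvdef, mkq] using this
    have hx' : x = 0 := by exact_mod_cast hx
    have hy' : y = 0 := by exact_mod_cast hy
    have hz' : z = 0 := by exact_mod_cast hz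
    rw [hx', hy', hz'] at hcop
    simp [Int.gcd] at hcop
  have hSne : S.Nonempty := by
    refine ⟨p^2 * n, v, hvinJ, hvne, ?_⟩
    rw [hnormv]; push_cast; ring
  set k₀ : ℕ := sInf S with hk₀def
  obtain ⟨q₀, hq₀J, hq₀ne, hq₀norm⟩ : ∃ w, InJ w ∧ w ≠ 0 ∧ normSq w = (k₀:ℚ) := Nat.sInf_mem hSne
  have hmin : ∀ w, InJ w → w ≠ 0 → (k₀:ℚ) ≤ normSq w := by
    intro w hw hwne
    obtain ⟨k, hk⟩ := (hInJ_hur w hw).normSq_nat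
    have : k ∈ S := ⟨w, hw, hwne, hk⟩
    have := Nat.sInf_le this
    rw [hk]; exact_mod_cast this
  have hInJ_sub_mul : ∀ a hq, InJ a → IsHur hq → InJ (a - hq * q₀) := by
    rintro a hq ⟨α, β, hα, hβ, rfl⟩ hhq
    obtain ⟨α₀, β₀, hα₀, hβ₀, hq₀eq⟩ := hq₀J
    refine ⟨α - hq * α₀, β - hq * β₀, hα.sub (hhq.mul hα₀), hβ.sub (hhq.mul hβ₀), ?_⟩
    rw [hq₀eq]; noncomm_ring
  have hgen : ∀ a, InJ a → ∃ hq, IsHur hq ∧ a = hq * q₀ := by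
    intro a ha
    obtain ⟨hq, hhq, hlt⟩ := hur_div a q₀ hq₀ne
    by_cases hr : a - hq * q₀ = 0
    · exact ⟨hq, hhq, by rw [← sub_eq_zero]; exact hr⟩
    · exfalso
      have := hmin _ (hInJ_sub_mul a hq ha hhq) hr
      rw [hq₀norm] at hlt
      linarith
  -- k₀ = p
  have hpinJ : InJ pQ := ⟨1, 0, isLip_one.isHur, isLip_zero.isHur, by simp⟩
  have hk₀p : k₀ = p := by
    obtain ⟨kq, hkq⟩ := hInJ_normdvd q₀ hq₀J
    have hpdvd : p ∣ k₀ := by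
      have hcast : ((k₀:ℤ):ℚ) = ((p * kq : ℤ):ℚ) := by
        push_cast; rw [← hq₀norm]; exact hkq
      have : (k₀:ℤ) = (p:ℤ) * kq := by exact_mod_cast hcast
      exact Int.natCast_dvd_natCast.mp ⟨kq, this⟩
    obtain ⟨h₁, hh₁, hpq⟩ := hgen pQ hpinJ
    obtain ⟨k₁, hk₁⟩ := hh₁.normSq_nat
    have hmulnorm : ((p^2 : ℕ):ℚ) = ((k₁ * k₀ : ℕ):ℚ) := by
      push_cast
      rw [← hnormpQ, hpq, map_mul, hk₁, hq₀norm]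
    have hnat : p^2 = k₁ * k₀ := by exact_mod_cast hmulnorm
    have hk₀dvd : k₀ ∣ p^2 := Dvd.intro_left k₁ hnat.symm
    obtain ⟨j, hj⟩ := hpdvd
    have hjp : j ∣ p := by
      have : p * j ∣ p * p := by rw [← hj, ← pow_two]; exact hk₀dvd
      exact (mul_dvd_mul_iff_left hp.pos.ne').mp this
    rcases (hp.eq_one_or_self_of_dvd j hjp) with hj1 | hjp'
    · rw [hj, hj1, mul_one]
    · -- k₀ = p² : impossible since v would be divisible by p
      exfalso
      have hk₀pp : k₀ = p * p := by rw [hj, hjp']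
      have hk₁1 : k₁ = 1 := by
        have hpp : 0 < p * p := Nat.mul_pos hp.pos hp.pos
        refine Nat.eq_of_mul_eq_mul_right hpp ?_
        calc k₁ * (p * p) = k₁ * k₀ := by rw [hk₀pp]
        _ = p ^ 2 := hnat.symm
        _ = 1 * (p * p) := by ring
      have hsm : star h₁ * h₁ = 1 := by
        rw [star_mul_self]
        rw [hk₁, hk₁1]
        norm_num
      have hq₀eq2 : q₀ = star h₁ * pQ := by
        calc q₀ = (star h₁ * h₁) * q₀ := by rw [hsm, one_mul]
        _ = star h₁ * (h₁ * q₀) := by rw [mul_assoc]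
        _ = star h₁ * pQ := by rw [← hpq]
      obtain ⟨h₂, hh₂, hveq⟩ := hgen v hvinJ
      have hveq2 : v = (p:ℚ) • (h₂ * star h₁) := by
        rw [hveq, hq₀eq2, ← mul_assoc, hmulpQ]
      have hghur : IsHur (h₂ * star h₁) := hh₂.mul hh₁.star
      have hgre : (h₂ * star h₁).re = 0 := by
        have hre := congrArg QuaternionAlgebra.re hveq2
        rw [hvre, Quaternion.re_smul, smul_eq_mul] at hre
        have := hre.symm
        rcases mul_eq_zero.mp this with h' | h'
        · exact absurd h' hpne
        · exact h'
      have hglip := hghur.isLip_of_re_zero hgre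
      obtain ⟨g0, g1, g2, g3, hgeq⟩ := hglip.eq_mkq
      have hx1 : (x:ℚ) = (p:ℚ) * (g1:ℚ) := by
        have := congrArg QuaternionAlgebra.imI hveq2
        simpa [hvdef, hgeq, Quaternion.imI_smul, smul_eq_mul] using this
      have hy1 : (y:ℚ) = (p:ℚ) * (g2:ℚ) := by
        have := congrArg QuaternionAlgebra.imJ hveq2
        simpa [hvdef, hgeq, Quaternion.imJ_smul, smul_eq_mul] using this
      have hz1 : (z:ℚ) = (p:ℚ) * (g3:ℚ) := by
        have := congrArg QuaternionAlgebra.imK hveq2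
        simpa [hvdef, hgeq, Quaternion.imK_smul, smul_eq_mul] using this
      have hdx : (p:ℤ) ∣ x := ⟨g1, by exact_mod_cast hx1⟩
      have hdy : (p:ℤ) ∣ y := ⟨g2, by exact_mod_cast hy1⟩
      have hdz : (p:ℤ) ∣ z := ⟨g3, by exact_mod_cast hz1⟩
      have htd1 : (p:ℤ) ∣ ((1:ℕ):ℤ) := by
        rw [← hcop]
        exact Int.dvd_coe_gcd (Int.dvd_coe_gcd hdx hdy) hdz
      have htd2 := Int.natCast_dvd_natCast.mp htd1
      have htd3 := Nat.le_of_dvd one_pos htd2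
      have := hp.two_le
      omega
  -- q₀ = α p + β v with norm p
  have hq₀hur : IsHur q₀ := hInJ_hur q₀ hq₀J
  obtain ⟨α, β, hα, hβ, hq₀eq⟩ := hq₀J
  have hq₀normp : normSq q₀ = (p:ℚ) := by rw [hq₀norm, hk₀p]
  have hq₀star : star q₀ = (p:ℚ) • star α - v * star β := by
    rw [hq₀eq, star_add, star_mul, star_mul, hvstar]
    have hst : star pQ = pQ := by simp [hpQdef]
    rw [hst, hpQmul (star α), neg_mul, ← sub_eq_add_neg]
  have h1 : q₀ * v = (p:ℚ) • (α * v) - ((p:ℚ)^2 * (n:ℚ)) • β := by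
    rw [hq₀eq, add_mul, hmulpQ α, mul_assoc β v v, hvv, smul_mul_assoc, mul_neg,
      mul_smul_comm, mul_one, ← sub_eq_add_neg]
  set W : Quaternion ℚ := α * v * star α + (n:ℚ) • (β * v * star β)
      + ((p:ℚ) * (n:ℚ)) • (α * star β - β * star α) with hWdef
  clear_value W
  have hmid : v * (v * star β) = -(((p:ℚ)^2 * (n:ℚ)) • star β) := by
    rw [← mul_assoc, hvv, neg_mul, smul_mul_assoc, one_mul]
  have hkey : q₀ * v * star q₀ = ((p:ℚ)^2) • W := by
    rw [h1, hq₀star, hWdef]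
    simp only [sub_mul, mul_sub, smul_mul_assoc, mul_smul_comm, smul_smul, smul_sub, smul_neg,
      mul_neg, mul_assoc, hmid]
    module
  have hWhur : IsHur W := by
    rw [hWdef]
    refine (((hα.mul hvlip.isHur).mul hα.star).add ?_).add ?_
    · rw [show ((n:ℕ):ℚ) = (((n:ℕ):ℤ):ℚ) by push_cast; ring]
      exact isHur_intCast_smul _ ((hβ.mul hvlip.isHur).mul hβ.star)
    · rw [show (p:ℚ) * (n:ℚ) = (((p * n : ℕ):ℤ):ℚ) by push_cast; ring]
      exact isHur_intCast_smul _ ((hα.mul hβ.star).sub (hβ.mul hα.star))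
  have hWstar : star W = -W := by
    rw [hWdef]
    simp only [star_add, Quaternion.star_smul, star_sub, star_mul, star_star, hvstar, mul_neg,
      neg_mul, mul_assoc]
    module
  have hWre : W.re = 0 := by
    have hre := congrArg QuaternionAlgebra.re hWstar
    simp only [Quaternion.re_star, Quaternion.re_neg] at hre
    linarith
  have hWlip : IsLip W := hWhur.isLip_of_re_zero hWre
  obtain ⟨a0, a1, a2, a3, hWeq⟩ := hWlip.eq_mkq
  have ha0 : (a0:ℚ) = 0 := by
    have : W.re = (a0:ℚ) := by rw [hWeq]; rfl
    rw [hWre] at this; exact this.symm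
  have hnormW : normSq W = (n:ℚ) := by
    have e1 : normSq (q₀ * v * star q₀) = (p:ℚ)^4 * (n:ℚ) := by
      rw [map_mul, map_mul, normSq_star, hq₀normp, hnormv]; ring
    have e2 : normSq (((p:ℚ)^2) • W) = (p:ℚ)^4 * normSq W := by
      rw [normSq_smul]; ring
    rw [← hkey, e1] at e2
    have hp4 : (p:ℚ)^4 ≠ 0 := pow_ne_zero 4 hpne
    field_simp at e2
    try exact e2
    try exact e2.symm
    try exact (mul_left_cancel₀ hp4 e2.symm).symm
  refine ⟨a1, a2, a3, ?_, ?_⟩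
  · have h7 : (n:ℚ) = (a1:ℚ)^2 + (a2:ℚ)^2 + (a3:ℚ)^2 := by
      rw [← hnormW, hWeq, normSq_def']
      simp [mkq, ha0]
      try ring
    exact_mod_cast h7
  · -- primitivity
    have hsq : star q₀ * q₀ = pQ := by
      rw [star_mul_self, hq₀normp, hpQdef]
      rw [← Quaternion.coe_mul_eq_smul, mul_one]
    have hback : star q₀ * W * q₀ = v := by
      have e3 : star q₀ * (q₀ * v * star q₀) * q₀ = ((p:ℚ)^2) • v := by
        calc star q₀ * (q₀ * v * star q₀) * q₀
            = (star q₀ * q₀) * v * (star q₀ * q₀) := by noncomm_ring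
        _ = pQ * v * pQ := by rw [hsq]
        _ = ((p:ℚ)^2) • v := by rw [hpQmul v, hmulpQ, smul_smul, ← pow_two]
      rw [hkey, mul_smul_comm, smul_mul_assoc] at e3
      exact smul_right_injective _ (pow_ne_zero 2 hpne) e3
    set g : ℕ := Int.gcd (Int.gcd a1 a2) a3 with hg
    have hga1 : (g:ℤ) ∣ a1 := dvd_trans (Int.gcd_dvd_left _ _) (Int.gcd_dvd_left _ _)
    have hga2 : (g:ℤ) ∣ a2 := dvd_trans (Int.gcd_dvd_left _ _) (Int.gcd_dvd_right _ _)
    have hga3 : (g:ℤ) ∣ a3 := Int.gcd_dvd_right _ _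
    obtain ⟨b1, hb1⟩ := hga1
    obtain ⟨b2, hb2⟩ := hga2
    obtain ⟨b3, hb3⟩ := hga3
    set W' : Quaternion ℚ := mkq 0 (b1:ℚ) (b2:ℚ) (b3:ℚ) with hW'def
    have hW'lip : IsLip W' := ⟨⟨0, by simp [hW'def]⟩, ⟨b1, rfl⟩, ⟨b2, rfl⟩, ⟨b3, rfl⟩⟩
    have hWW' : W = (g:ℚ) • W' := by
      rw [hWeq, hW'def]
      ext
      · simp [ha0, Quaternion.re_smul]
      · simp [Quaternion.imI_smul, smul_eq_mul]
        rw [hb1]; push_cast; ring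
      · simp [Quaternion.imJ_smul, smul_eq_mul]
        rw [hb2]; push_cast; ring
      · simp [Quaternion.imK_smul, smul_eq_mul]
        rw [hb3]; push_cast; ring
    have hW'star : star W' = -W' := by ext <;> simp [hW'def]
    set u : Quaternion ℚ := star q₀ * W' * q₀ with hudef
    have huhur : IsHur u := (hq₀hur.star.mul hW'lip.isHur).mul hq₀hur
    have hustar : star u = -u := by
      rw [hudef]
      simp only [star_mul, star_star, hW'star, mul_neg, neg_mul, mul_assoc]
    have hure : u.re = 0 := by
      have hre := congrArg QuaternionAlgebra.re hustar
      simp only [Quaternion.re_star, Quaternion.re_neg] at hre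
      linarith
    have hulip : IsLip u := huhur.isLip_of_re_zero hure
    obtain ⟨c0, c1, c2, c3, hueq⟩ := hulip.eq_mkq
    have hvu : v = (g:ℚ) • u := by
      rw [← hback, hWW', mul_smul_comm, smul_mul_assoc, hudef]
    have hx1 : (x:ℚ) = (g:ℚ) * (c1:ℚ) := by
      have := congrArg QuaternionAlgebra.imI hvu
      simpa [hvdef, hueq, Quaternion.imI_smul, smul_eq_mul] using this
    have hy1 : (y:ℚ) = (g:ℚ) * (c2:ℚ) := by
      have := congrArg QuaternionAlgebra.imJ hvu
      simpa [hvdef, hueq, Quaternion.imJ_smul, smul_eq_mul] using this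
    have hz1 : (z:ℚ) = (g:ℚ) * (c3:ℚ) := by
      have := congrArg QuaternionAlgebra.imK hvu
      simpa [hvdef, hueq, Quaternion.imK_smul, smul_eq_mul] using this
    have hdx : (g:ℤ) ∣ x := ⟨c1, by exact_mod_cast hx1⟩
    have hdy : (g:ℤ) ∣ y := ⟨c2, by exact_mod_cast hy1⟩
    have hdz : (g:ℤ) ∣ z := ⟨c3, by exact_mod_cast hz1⟩
    have htd1 : (g:ℤ) ∣ ((1:ℕ):ℤ) := by
      rw [← hcop]
      exact Int.dvd_coe_gcd (Int.dvd_coe_gcd hdx hdy) hdz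
    have htd2 := Int.natCast_dvd_natCast.mp htd1
    exact Nat.dvd_one.mp htd2

lemma sq_mod_four (t : ℤ) : (∃ A : ℤ, t^2 = 4*A ∧ (2:ℤ) ∣ t) ∨ (∃ A : ℤ, t^2 = 4*A + 1) := by
  rcases Int.even_or_odd t with ⟨k, hk⟩ | ⟨k, hk⟩
  · exact Or.inl ⟨k*k, by rw [hk]; ring, ⟨k, by omega⟩⟩
  · exact Or.inr ⟨k*k + k, by rw [hk]; ring⟩

lemma descent_all (m : ℕ) : ∀ d : ℕ, 0 < d → ∀ x y z : ℤ,
    (d:ℤ)^2 * m = x^2 + y^2 + z^2 → Int.gcd (Int.gcd x y) z = 1 →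
    ∃ a b c : ℤ, (m:ℤ) = a^2 + b^2 + c^2 ∧ Int.gcd (Int.gcd a b) c = 1 := by
  intro d
  induction d using Nat.strong_induction_on with
  | _ d ih =>
    intro hd x y z h hcop
    by_cases hd1 : d = 1
    · subst hd1
      exact ⟨x, y, z, by simpa using h, hcop⟩
    · have hd2 : 2 ≤ d := by omega
      set p := d.minFac with hpdef
      have hp : p.Prime := Nat.minFac_prime hd1
      have hdvd : p ∣ d := Nat.minFac_dvd d
      by_cases hp2 : p = 2
      · -- d is even: contradiction with coprimality
        exfalso
        obtain ⟨e, he⟩ : (2:ℤ) ∣ (d:ℤ) := by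
          have h9 := Int.natCast_dvd_natCast.mpr hdvd
          rw [hp2] at h9
          exact_mod_cast h9
        have heq : 4 * (e * e * (m:ℤ)) = x^2 + y^2 + z^2 := by
          rw [← h, he]; ring
        rcases sq_mod_four x with ⟨A, hA, hdx⟩ | ⟨A, hA⟩ <;>
          rcases sq_mod_four y with ⟨B, hB, hdy⟩ | ⟨B, hB⟩ <;>
          rcases sq_mod_four z with ⟨C, hC, hdz⟩ | ⟨C, hC⟩ <;>
          first
          | omega
          | (refine absurd ?_ (by norm_num : ¬ (2:ℤ) ∣ ((1:ℕ):ℤ))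
             rw [← hcop]
             exact Int.dvd_coe_gcd (Int.dvd_coe_gcd hdx hdy) hdz)
      · -- p odd prime: descend
        obtain ⟨d', hd'⟩ := hdvd
        have hd'pos : 0 < d' := by
          rcases Nat.eq_zero_or_pos d' with h0 | h0
          · subst h0; simp at hd'; omega
          · exact h0
        have hstep : (p:ℤ)^2 * ((d'^2 * m : ℕ):ℤ) = x^2 + y^2 + z^2 := by
          rw [← h, hd']; push_cast; ring
        obtain ⟨a, b, c, hab, hcop'⟩ := descent_step p hp hp2 (d'^2 * m) x y z hstep hcop
        have hd'lt : d' < d := by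
          rw [hd']
          have hp1 : 1 < p := hp.one_lt
          nlinarith
        refine ih d' hd'lt hd'pos a b c ?_ hcop'
        rw [← hab]; push_cast; ring

/-- If `d²·m` is a sum of three coprime squares, then so is `m`. -/
theorem sum_three_coprime_squares_descent (d m : ℕ) (hd : 0 < d) (hm : 0 < m)
    (x y z : ℤ) (h : (d : ℤ)^2 * m = x^2 + y^2 + z^2)
    (hcop : Int.gcd (Int.gcd x y) z = 1) :
    ∃ a b c : ℤ, (m : ℤ) = a^2 + b^2 + c^2 ∧ Int.gcd (Int.gcd a b) c = 1 :=
  descent_all m d hd x y z h hcop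
end
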